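/- arXiv:1009.1312 — 5 statements merged into one kernel-verified Lean document; each statement's English description precedes it below -/
import Mathlib

section
/- If F has finite second moment, then for i ≤ j the covariance of the partial maxima satisfies Cov[X_{i:i}, X_{j:j}] = ∫∫_{x<y} F^i(x) (F^{j-i}(x) + F^{j-i}(y)) (1 - F^i(y)) dy dx, which is finite and non-negative. -/
open MeasureTheory ProbabilityTheory Set

noncomputable def pmg (u x : ℝ) : ℝ := (if x < u then 1 else 0) - (if x < 0 then 1 else 0)

lemma pmg_eq (u : ℝ) : pmg u = fun x => (Ico (0:ℝ) u).indicator 1 x - (Ico u 0).indicator 1 x := by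
  funext x
  unfold pmg
  by_cases h1 : x < u <;> by_cases h2 : x < 0
  · simp [Set.indicator_apply, Set.mem_Ico, h1, h2, not_le.mpr h2, not_le.mpr h1]
  · simp [Set.indicator_apply, Set.mem_Ico, h1, h2, not_lt.mp h2]
  · simp [Set.indicator_apply, Set.mem_Ico, h1, h2, not_lt.mp h1]
  · simp [Set.indicator_apply, Set.mem_Ico, h1, h2]

lemma pmg_ind_integrable (a b : ℝ) : Integrable ((Ico a b).indicator (1 : ℝ → ℝ)) volume := by
  rw [integrable_indicator_iff measurableSet_Ico]
  exact (integrableOn_const_iff).mpr (Or.inr (by rw [Real.volume_Ico]; exact ENNReal.ofReal_lt_top))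

lemma pmg_integrable (u : ℝ) : Integrable (pmg u) volume := by
  rw [pmg_eq]; exact (pmg_ind_integrable 0 u).sub (pmg_ind_integrable u 0)

lemma pmg_ind_integral (a b : ℝ) :
    ∫ x, (Ico a b).indicator (1 : ℝ → ℝ) x = max (b - a) 0 := by
  rw [integral_indicator_one measurableSet_Ico, measureReal_def, Real.volume_Ico]
  rcases le_total (b - a) 0 with h | h
  · rw [ENNReal.ofReal_eq_zero.mpr h, max_eq_right h]; simp
  · rw [ENNReal.toReal_ofReal h, max_eq_left h]

lemma pmg_integral (u : ℝ) : ∫ x, pmg u x = u := by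
  rw [pmg_eq]
  rw [integral_sub (pmg_ind_integrable 0 u) (pmg_ind_integrable u 0),
    pmg_ind_integral, pmg_ind_integral]
  rcases le_total 0 u with h | h
  · rw [max_eq_left (by linarith), max_eq_right (by linarith)]; ring
  · rw [max_eq_right (by linarith), max_eq_left (by linarith)]; ring

lemma pmg_abs (u x : ℝ) :
    |pmg u x| = (Ico (0:ℝ) u).indicator 1 x + (Ico u 0).indicator 1 x := by
  rw [pmg_eq]
  rcases le_total 0 u with h | h
  · rw [Ico_eq_empty (a := u) (by simp only [not_lt]; exact h)]
    simp [abs_of_nonneg, Set.indicator_apply]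
    split <;> simp
  · rw [Ico_eq_empty (a := (0:ℝ)) (by simp only [not_lt]; exact h)]
    simp [Set.indicator_apply]
    split <;> simp

lemma pmg_integral_abs (u : ℝ) : ∫ x, |pmg u x| = |u| := by
  simp_rw [pmg_abs]
  rw [integral_add (pmg_ind_integrable 0 u) (pmg_ind_integrable u 0),
    pmg_ind_integral, pmg_ind_integral]
  rcases le_total 0 u with h | h
  · rw [max_eq_left (by linarith), max_eq_right (by linarith), abs_of_nonneg h]; ring
  · rw [max_eq_right (by linarith), max_eq_left (by linarith), abs_of_nonpos h]; ring

section Helpers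
variable {Ω : Type*} [MeasurableSpace Ω]

lemma pmg_apply (W : Ω → ℝ) (t : ℝ) (ω : Ω) :
    pmg (W ω) t = ({ω' | t < W ω'} : Set Ω).indicator 1 ω - (if t < 0 then 1 else 0) := by
  unfold pmg
  simp [Set.indicator_apply, Set.mem_setOf_eq]

lemma pmg_measurable {W : Ω → ℝ} (hW : Measurable W) :
    Measurable (fun q : Ω × ℝ => pmg (W q.1) q.2) := by
  unfold pmg
  exact ((measurable_const.ite
      (measurableSet_lt measurable_snd (hW.comp measurable_fst)) measurable_const).sub
    (measurable_const.ite (measurableSet_lt measurable_snd measurable_const) measurable_const))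

lemma pmg_measurable2 {U V : Ω → ℝ} (hU : Measurable U) (hV : Measurable V) :
    Measurable (fun q : Ω × (ℝ × ℝ) => pmg (U q.1) q.2.1 * pmg (V q.1) q.2.2) := by
  exact ((pmg_measurable hU).comp
      (measurable_fst.prodMk (measurable_fst.comp measurable_snd))).mul
    ((pmg_measurable hV).comp (measurable_fst.prodMk (measurable_snd.comp measurable_snd)))

lemma integral_ind_sub_mul (P : Measure Ω) [IsProbabilityMeasure P] {A B : Set Ω}
    (hA : MeasurableSet A) (hB : MeasurableSet B) (a b : ℝ) :
    ∫ ω, (A.indicator 1 ω - a) * (B.indicator 1 ω - b) ∂P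
      = (P (A ∩ B)).toReal - a * (P B).toReal - b * (P A).toReal + a * b := by
  have e : ∀ ω, (A.indicator 1 ω - a) * (B.indicator 1 ω - b)
      = (A ∩ B).indicator 1 ω - a * B.indicator 1 ω - b * A.indicator 1 ω + a * b := by
    intro ω
    rw [Set.inter_indicator_one]
    simp only [Pi.mul_apply]
    ring
  simp_rw [e]
  have iA : Integrable (A.indicator (1 : Ω → ℝ)) P := (integrable_const 1).indicator hA
  have iB : Integrable (B.indicator (1 : Ω → ℝ)) P := (integrable_const 1).indicator hB
  have iAB : Integrable ((A ∩ B).indicator (1 : Ω → ℝ)) P :=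
    (integrable_const 1).indicator (hA.inter hB)
  have h1 : Integrable (fun ω => (A ∩ B).indicator 1 ω - a * B.indicator 1 ω
      - b * A.indicator 1 ω) P := (iAB.sub (iB.const_mul a)).sub (iA.const_mul b)
  have h2 : Integrable (fun ω => (A ∩ B).indicator 1 ω - a * B.indicator 1 ω) P :=
    iAB.sub (iB.const_mul a)
  rw [integral_add h1 (integrable_const _),
    integral_sub h2 (iA.const_mul b),
    integral_sub iAB (iB.const_mul a), integral_const_mul, integral_const_mul,
    integral_indicator_one (hA.inter hB), integral_indicator_one hA, integral_indicator_one hB,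
    integral_const]
  simp [measureReal_def]

end Helpers

section Hoeffding
variable {Ω : Type*} [MeasurableSpace Ω]

lemma hoeffding_formula (P : Measure Ω) [IsProbabilityMeasure P]
    {U V : Ω → ℝ} (hUm : Measurable U) (hVm : Measurable V)
    (hU2 : MemLp U 2 P) (hV2 : MemLp V 2 P) :
    Integrable (fun p : ℝ × ℝ => (P {ω | U ω ≤ p.1 ∧ V ω ≤ p.2}).toReal
        - (P {ω | U ω ≤ p.1}).toReal * (P {ω | V ω ≤ p.2}).toReal) volume ∧
    ∫ ω, (U ω - ∫ ω', U ω' ∂P) * (V ω - ∫ ω', V ω' ∂P) ∂P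
      = ∫ p : ℝ × ℝ, ((P {ω | U ω ≤ p.1 ∧ V ω ≤ p.2}).toReal
        - (P {ω | U ω ≤ p.1}).toReal * (P {ω | V ω ≤ p.2}).toReal) := by
  have hvol : (volume : Measure (ℝ × ℝ)) = (volume : Measure ℝ).prod volume :=
    (MeasureTheory.Measure.volume_eq_prod ℝ ℝ)
  have hIU : Integrable U P := hU2.integrable one_le_two
  have hIV : Integrable V P := hV2.integrable one_le_two
  have hIUV : Integrable (fun ω => U ω * V ω) P := by
    have hsq : Integrable (fun ω => (U ω ^ 2 + V ω ^ 2) / 2) P := by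
      have := (hU2.integrable_sq.add hV2.integrable_sq).div_const 2
      simpa using this
    refine Integrable.mono' hsq
      (hUm.mul hVm).aestronglyMeasurable (Filter.Eventually.of_forall fun ω => ?_)
    rw [Real.norm_eq_abs, abs_mul]
    nlinarith [abs_nonneg (U ω), abs_nonneg (V ω), sq_abs (U ω), sq_abs (V ω),
      sq_nonneg (|U ω| - |V ω|)]
  have hIabsUV : Integrable (fun ω => |U ω| * |V ω|) P :=
    hIUV.abs.congr (Filter.Eventually.of_forall fun ω => (abs_mul (U ω) (V ω)))
  -- the big kernel
  set G : Ω × (ℝ × ℝ) → ℝ := fun q => pmg (U q.1) q.2.1 * pmg (V q.1) q.2.2 with hGdef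
  have hGm : Measurable G := pmg_measurable2 hUm hVm
  have hGint : Integrable G (P.prod volume) := by
    refine (integrable_prod_iff hGm.aestronglyMeasurable).mpr ⟨?_, ?_⟩
    · refine Filter.Eventually.of_forall fun ω => ?_
      rw [hvol]
      exact (pmg_integrable (U ω)).mul_prod (pmg_integrable (V ω))
    · have hnorm : ∀ ω, (∫ p : ℝ × ℝ, ‖G (ω, p)‖) = |U ω| * |V ω| := by
        intro ω
        rw [hvol]
        have : (fun p : ℝ × ℝ => ‖G (ω, p)‖)
            = fun p : ℝ × ℝ => |pmg (U ω) p.1| * |pmg (V ω) p.2| := by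
          funext p; rw [hGdef]; simp [Real.norm_eq_abs, abs_mul]
        rw [this]
        have h2 := integral_prod_mul (μ := (volume : Measure ℝ)) (ν := (volume : Measure ℝ))
          (fun x => |pmg (U ω) x|) (fun y => |pmg (V ω) y|)
        rw [pmg_integral_abs, pmg_integral_abs] at h2
        exact h2
      exact hIabsUV.congr (Filter.Eventually.of_forall fun ω => (hnorm ω).symm)
  set η : ℝ × ℝ → ℝ := fun p => ∫ ω, G (ω, p) ∂P with hηdef
  have hηint : Integrable η volume := by
    rw [hvol]
    exact hGint.swap.integral_prod_left
  have E1 : ∫ ω, U ω * V ω ∂P = ∫ p : ℝ × ℝ, η p := by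
    have h1 : ∀ ω, U ω * V ω = ∫ p : ℝ × ℝ, G (ω, p) := by
      intro ω
      rw [hvol, hGdef]
      have h2 := integral_prod_mul (μ := (volume : Measure ℝ)) (ν := (volume : Measure ℝ))
        (fun x => pmg (U ω) x) (fun y => pmg (V ω) y)
      rw [pmg_integral, pmg_integral] at h2
      exact h2.symm
    calc ∫ ω, U ω * V ω ∂P = ∫ ω, (∫ p : ℝ × ℝ, G (ω, p)) ∂P := by
          exact integral_congr_ae (Filter.Eventually.of_forall fun ω => h1 ω)
      _ = ∫ p : ℝ × ℝ, ∫ ω, G (ω, p) ∂P := integral_integral_swap hGint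
  -- marginal kernels
  set G1 : Ω × ℝ → ℝ := fun q => pmg (U q.1) q.2 with hG1def
  set G2 : Ω × ℝ → ℝ := fun q => pmg (V q.1) q.2 with hG2def
  have hG1int : Integrable G1 (P.prod volume) := by
    refine (integrable_prod_iff (pmg_measurable hUm).aestronglyMeasurable).mpr ⟨?_, ?_⟩
    · exact Filter.Eventually.of_forall fun ω => pmg_integrable (U ω)
    · refine hIU.abs.congr (Filter.Eventually.of_forall fun ω => ?_)
      simp only [hG1def, Real.norm_eq_abs]
      rw [pmg_integral_abs]
  have hG2int : Integrable G2 (P.prod volume) := by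
    refine (integrable_prod_iff (pmg_measurable hVm).aestronglyMeasurable).mpr ⟨?_, ?_⟩
    · exact Filter.Eventually.of_forall fun ω => pmg_integrable (V ω)
    · refine hIV.abs.congr (Filter.Eventually.of_forall fun ω => ?_)
      simp only [hG2def, Real.norm_eq_abs]
      rw [pmg_integral_abs]
  set φ : ℝ → ℝ := fun x => ∫ ω, pmg (U ω) x ∂P with hφdef
  set ψ : ℝ → ℝ := fun y => ∫ ω, pmg (V ω) y ∂P with hψdef
  have hφint : Integrable φ volume := hG1int.swap.integral_prod_left
  have hψint : Integrable ψ volume := hG2int.swap.integral_prod_left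
  have hφeq : ∫ x, φ x = ∫ ω, U ω ∂P := by
    rw [hφdef, ← integral_integral_swap hG1int]
    exact integral_congr_ae (Filter.Eventually.of_forall fun ω => pmg_integral (U ω))
  have hψeq : ∫ y, ψ y = ∫ ω, V ω ∂P := by
    rw [hψdef, ← integral_integral_swap hG2int]
    exact integral_congr_ae (Filter.Eventually.of_forall fun ω => pmg_integral (V ω))
  have hφψint : Integrable (fun p : ℝ × ℝ => φ p.1 * ψ p.2) volume := by
    rw [hvol]; exact hφint.mul_prod hψint
  have E2 : (∫ ω, U ω ∂P) * (∫ ω, V ω ∂P) = ∫ p : ℝ × ℝ, φ p.1 * ψ p.2 := by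
    rw [hvol, integral_prod_mul, hφeq, hψeq]
  -- pointwise identification
  have hpt : ∀ p : ℝ × ℝ, η p - φ p.1 * ψ p.2
      = (P {ω | U ω ≤ p.1 ∧ V ω ≤ p.2}).toReal
        - (P {ω | U ω ≤ p.1}).toReal * (P {ω | V ω ≤ p.2}).toReal := by
    intro p
    obtain ⟨x, y⟩ := p
    have hA : MeasurableSet {ω | x < U ω} := hUm measurableSet_Ioi
    have hB : MeasurableSet {ω | y < V ω} := hVm measurableSet_Ioi
    have hC : MeasurableSet {ω | U ω ≤ x} := hUm measurableSet_Iic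
    have hD : MeasurableSet {ω | V ω ≤ y} := hVm measurableSet_Iic
    have hη : η (x, y) = (P ({ω | x < U ω} ∩ {ω | y < V ω})).toReal
        - (if x < 0 then (1:ℝ) else 0) * (P {ω | y < V ω}).toReal
        - (if y < 0 then (1:ℝ) else 0) * (P {ω | x < U ω}).toReal
        + (if x < 0 then (1:ℝ) else 0) * (if y < 0 then (1:ℝ) else 0) := by
      rw [hηdef]
      simp only [hGdef]
      simp_rw [pmg_apply U x, pmg_apply V y]
      exact integral_ind_sub_mul P hA hB _ _
    have hφx : φ x = (P {ω | x < U ω}).toReal - (if x < 0 then (1:ℝ) else 0) := by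
      rw [hφdef]
      simp_rw [pmg_apply U x]
      have hind : Integrable ({ω' | x < U ω'}.indicator (1 : Ω → ℝ)) P :=
        (integrable_const 1).indicator hA
      rw [integral_sub hind (integrable_const (if x < 0 then (1:ℝ) else 0)),
        integral_indicator_one hA, integral_const]
      simp [measureReal_def]
    have hψy : ψ y = (P {ω | y < V ω}).toReal - (if y < 0 then (1:ℝ) else 0) := by
      rw [hψdef]
      simp_rw [pmg_apply V y]
      have hind : Integrable ({ω' | y < V ω'}.indicator (1 : Ω → ℝ)) P :=
        (integrable_const 1).indicator hB
      rw [integral_sub hind (integrable_const (if y < 0 then (1:ℝ) else 0)),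
        integral_indicator_one hB, integral_const]
      simp [measureReal_def]
    -- survival → CDF
    have hcomplA : {ω | x < U ω} = {ω | U ω ≤ x}ᶜ := by ext ω; simp [not_le]
    have hcomplB : {ω | y < V ω} = {ω | V ω ≤ y}ᶜ := by ext ω; simp [not_le]
    have hcompl2 : ({ω | x < U ω} ∩ {ω | y < V ω}) = ({ω | U ω ≤ x} ∪ {ω | V ω ≤ y})ᶜ := by
      rw [Set.compl_union, hcomplA, hcomplB]
    have hSet : {ω | U ω ≤ x ∧ V ω ≤ y} = {ω | U ω ≤ x} ∩ {ω | V ω ≤ y} := rfl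
    set tC := (P {ω | U ω ≤ x}).toReal
    set tD := (P {ω | V ω ≤ y}).toReal
    set tCD := (P ({ω | U ω ≤ x} ∩ {ω | V ω ≤ y})).toReal
    have hsum : (P ({ω | U ω ≤ x} ∪ {ω | V ω ≤ y})).toReal + tCD = tC + tD := by
      have h := measure_union_add_inter {ω | U ω ≤ x} hD (μ := P)
      have := congrArg ENNReal.toReal h
      rwa [ENNReal.toReal_add (measure_ne_top _ _) (measure_ne_top _ _),
        ENNReal.toReal_add (measure_ne_top _ _) (measure_ne_top _ _)] at this
    have hcA : (P {ω | x < U ω}).toReal = 1 - tC := by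
      rw [hcomplA, measure_compl hC (measure_ne_top _ _),
        ENNReal.toReal_sub_of_le (measure_mono (Set.subset_univ _)) (measure_ne_top _ _)]
      simp
      rfl
    have hcB : (P {ω | y < V ω}).toReal = 1 - tD := by
      rw [hcomplB, measure_compl hD (measure_ne_top _ _),
        ENNReal.toReal_sub_of_le (measure_mono (Set.subset_univ _)) (measure_ne_top _ _)]
      simp
      rfl
    have hcAB : (P ({ω | x < U ω} ∩ {ω | y < V ω})).toReal
        = 1 - (P ({ω | U ω ≤ x} ∪ {ω | V ω ≤ y})).toReal := by
      rw [hcompl2, measure_compl (hC.union hD) (measure_ne_top _ _),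
        ENNReal.toReal_sub_of_le (measure_mono (Set.subset_univ _)) (measure_ne_top _ _)]
      simp
    have hU' : (P ({ω | U ω ≤ x} ∪ {ω | V ω ≤ y})).toReal = tC + tD - tCD := by linarith
    rw [hη, hφx, hψy, hSet, hcA, hcB, hcAB, hU']
    ring
  -- covariance expansion
  have hcovexp : ∫ ω, (U ω - ∫ ω', U ω' ∂P) * (V ω - ∫ ω', V ω' ∂P) ∂P
      = (∫ ω, U ω * V ω ∂P) - (∫ ω, U ω ∂P) * (∫ ω, V ω ∂P) := by
    set cU := ∫ ω', U ω' ∂P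
    set cV := ∫ ω', V ω' ∂P
    have e : ∀ ω, (U ω - cU) * (V ω - cV) = U ω * V ω - cU * V ω - cV * U ω + cU * cV := by
      intro ω; ring
    simp_rw [e]
    have h1 : Integrable (fun ω => U ω * V ω - cU * V ω - cV * U ω) P :=
      (hIUV.sub (hIV.const_mul cU)).sub (hIU.const_mul cV)
    have h2 : Integrable (fun ω => U ω * V ω - cU * V ω) P := hIUV.sub (hIV.const_mul cU)
    rw [integral_add h1 (integrable_const _), integral_sub h2 (hIU.const_mul cV),
      integral_sub hIUV (hIV.const_mul cU), integral_const_mul, integral_const_mul, integral_const]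
    simp only [probReal_univ, measure_univ, ENNReal.toReal_one, smul_eq_mul, one_mul]
    ring
  constructor
  · exact (hηint.sub hφψint).congr (Filter.Eventually.of_forall fun p => hpt p)
  · rw [hcovexp, E1, E2, ← integral_sub hηint hφψint]
    exact integral_congr_ae (Filter.Eventually.of_forall fun p => hpt p)

end Hoeffding

/-- Covariance formula for partial maxima: for `i ≤ j`,
`Cov[X_{i:i}, X_{j:j}] = ∫∫_{x<y} F^i(x)(F^{j-i}(x)+F^{j-i}(y))(1-F^i(y)) dy dx`,
which is finite and non-negative. -/
theorem partial_maxima_covariance_formula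
    {Ω : Type*} [MeasurableSpace Ω] (P : Measure Ω) [IsProbabilityMeasure P]
    (X : ℕ → Ω → ℝ) (hmeas : ∀ k, Measurable (X k))
    (hindep : iIndepFun X P)
    (hid : ∀ k, P.map (X k) = P.map (X 1))
    (hL2 : MemLp (X 1) 2 P)
    (F : ℝ → ℝ) (hF : ∀ x, F x = (P (X 1 ⁻¹' Set.Iic x)).toReal)
    (Y : ℕ → Ω → ℝ) (hY1 : Y 1 = X 1)
    (hYs : ∀ k, 1 ≤ k → ∀ ω, Y (k + 1) ω = max (Y k ω) (X (k + 1) ω))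
    (i j : ℕ) (hi : 1 ≤ i) (hij : i ≤ j) :
    IntegrableOn
      (fun p : ℝ × ℝ => F p.1 ^ i * (F p.1 ^ (j - i) + F p.2 ^ (j - i)) * (1 - F p.2 ^ i))
      {p : ℝ × ℝ | p.1 < p.2} volume ∧
    (∫ ω, (Y i ω - ∫ ω', Y i ω' ∂P) * (Y j ω - ∫ ω', Y j ω' ∂P) ∂P) =
      ∫ p in {p : ℝ × ℝ | p.1 < p.2},
        F p.1 ^ i * (F p.1 ^ (j - i) + F p.2 ^ (j - i)) * (1 - F p.2 ^ i) ∧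
    0 ≤ ∫ ω, (Y i ω - ∫ ω', Y i ω' ∂P) * (Y j ω - ∫ ω', Y j ω' ∂P) ∂P := by
  have hj : 1 ≤ j := hi.trans hij
  have hvol : (volume : Measure (ℝ × ℝ)) = (volume : Measure ℝ).prod volume :=
    (MeasureTheory.Measure.volume_eq_prod ℝ ℝ)
  -- identical distribution facts
  have hμ : ∀ k c, P (X k ⁻¹' Set.Iic c) = P (X 1 ⁻¹' Set.Iic c) := by
    intro k c
    rw [← Measure.map_apply (hmeas k) measurableSet_Iic, hid k,
      Measure.map_apply (hmeas 1) measurableSet_Iic]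
  have hX2 : ∀ m, MemLp (X m) 2 P := by
    intro m
    have h1 : MemLp (id : ℝ → ℝ) 2 (P.map (X 1)) := by
      rw [memLp_map_measure_iff measurable_id.aestronglyMeasurable (hmeas 1).aemeasurable]
      exact hL2
    have h2 : MemLp (id : ℝ → ℝ) 2 (P.map (X m)) := by rw [hid m]; exact h1
    rw [memLp_map_measure_iff measurable_id.aestronglyMeasurable (hmeas m).aemeasurable] at h2
    exact h2
  -- measurability and L² of partial maxima
  have hYm : ∀ k, 1 ≤ k → Measurable (Y k) := by
    intro k hk
    induction k, hk using Nat.le_induction with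
    | base => rw [hY1]; exact hmeas 1
    | succ k hk ih =>
      have : Y (k + 1) = fun ω => max (Y k ω) (X (k + 1) ω) := funext fun ω => hYs k hk ω
      rw [this]
      exact ih.max (hmeas (k + 1))
  have hY2 : ∀ k, 1 ≤ k → MemLp (Y k) 2 P := by
    intro k hk
    induction k, hk using Nat.le_induction with
    | base => rw [hY1]; exact hL2
    | succ k hk ih =>
      have h1 : Y (k + 1) = fun ω => max (Y k ω) (X (k + 1) ω) := funext fun ω => hYs k hk ω
      have h2 := ih.sup (hX2 (k + 1))
      have h3 : Y k ⊔ X (k + 1) = fun ω => max (Y k ω) (X (k + 1) ω) := by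
        funext ω; simp [Pi.sup_apply]
      rw [h1, ← h3]
      exact h2
  -- pointwise description of partial maxima
  have hYle : ∀ k, 1 ≤ k → ∀ (t : ℝ) (ω : Ω),
      Y k ω ≤ t ↔ ∀ m ∈ Finset.Ioc 0 k, X m ω ≤ t := by
    intro k hk
    induction k, hk using Nat.le_induction with
    | base => intro t ω; rw [hY1]; simp
    | succ k hk ih =>
      intro t ω
      rw [hYs k hk ω, max_le_iff, ih t ω]
      constructor
      · rintro ⟨h1, h2⟩ m hm
        rw [Finset.mem_Ioc] at hm
        rcases Nat.lt_or_ge m (k + 1) with h | h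
        · exact h1 m (Finset.mem_Ioc.mpr ⟨hm.1, Nat.lt_succ_iff.mp h⟩)
        · have : m = k + 1 := le_antisymm hm.2 h
          rw [this]; exact h2
      · intro h
        refine ⟨fun m hm => h m ?_, h (k + 1) (Finset.mem_Ioc.mpr ⟨Nat.succ_pos k, le_refl _⟩)⟩
        rw [Finset.mem_Ioc] at hm ⊢
        exact ⟨hm.1, hm.2.trans (Nat.le_succ k)⟩
  -- product formula from independence
  have hprod : ∀ (S : Finset ℕ) (c : ℕ → ℝ),
      P (⋂ m ∈ S, X m ⁻¹' Set.Iic (c m)) = ∏ m ∈ S, P (X 1 ⁻¹' Set.Iic (c m)) := by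
    intro S c
    rw [hindep.meas_biInter (fun m _ => ⟨Set.Iic (c m), measurableSet_Iic, rfl⟩)]
    exact Finset.prod_congr rfl fun m _ => hμ m (c m)
  -- marginal laws
  have hmarg : ∀ k, 1 ≤ k → ∀ t : ℝ,
      (P {ω | Y k ω ≤ t}).toReal = F t ^ k := by
    intro k hk t
    have hset : {ω | Y k ω ≤ t} = ⋂ m ∈ Finset.Ioc 0 k, X m ⁻¹' Set.Iic t := by
      ext ω
      simp only [Set.mem_setOf_eq, Set.mem_iInter, Set.mem_preimage, Set.mem_Iic]
      exact hYle k hk t ω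
    rw [hset, hprod (Finset.Ioc 0 k) (fun _ => t), Finset.prod_const, Nat.card_Ioc,
      Nat.sub_zero, ENNReal.toReal_pow, hF]
  -- joint law
  have hjoint : ∀ x y : ℝ,
      (P {ω | Y i ω ≤ x ∧ Y j ω ≤ y}).toReal = F (min x y) ^ i * F y ^ (j - i) := by
    intro x y
    set c : ℕ → ℝ := fun m => if m ≤ i then min x y else y with hc
    have hcle : ∀ m, m ≤ i → c m = min x y := fun m hm => by simp only [hc, if_pos hm]
    have hcgt : ∀ m, ¬ m ≤ i → c m = y := fun m hm => by simp only [hc, if_neg hm]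
    have hset : {ω | Y i ω ≤ x ∧ Y j ω ≤ y} = ⋂ m ∈ Finset.Ioc 0 j, X m ⁻¹' Set.Iic (c m) := by
      ext ω
      simp only [Set.mem_setOf_eq, Set.mem_iInter, Set.mem_preimage, Set.mem_Iic,
        hYle i hi x ω, hYle j hj y ω, Finset.mem_Ioc]
      constructor
      · rintro ⟨h1, h2⟩ m ⟨h0m, hmj⟩
        by_cases hmi : m ≤ i
        · rw [hcle m hmi]
          exact le_min (h1 m ⟨h0m, hmi⟩) (h2 m ⟨h0m, hmj⟩)
        · rw [hcgt m hmi]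
          exact h2 m ⟨h0m, hmj⟩
      · intro h
        constructor
        · rintro m ⟨h0m, hmi⟩
          have := h m ⟨h0m, hmi.trans hij⟩
          rw [hcle m hmi] at this
          exact this.trans (min_le_left x y)
        · rintro m ⟨h0m, hmj⟩
          have := h m ⟨h0m, hmj⟩
          by_cases hmi : m ≤ i
          · rw [hcle m hmi] at this
            exact this.trans (min_le_right x y)
          · rw [hcgt m hmi] at this
            exact this
    rw [hset, hprod (Finset.Ioc 0 j) c]
    rw [← Finset.prod_Ioc_consecutive _ (Nat.zero_le i) hij]
    have e1 : ∏ m ∈ Finset.Ioc 0 i, P (X 1 ⁻¹' Set.Iic (c m))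
        = P (X 1 ⁻¹' Set.Iic (min x y)) ^ i := by
      calc ∏ m ∈ Finset.Ioc 0 i, P (X 1 ⁻¹' Set.Iic (c m))
          = ∏ m ∈ Finset.Ioc 0 i, P (X 1 ⁻¹' Set.Iic (min x y)) :=
            Finset.prod_congr rfl fun m hm => by rw [hcle m (Finset.mem_Ioc.mp hm).2]
        _ = P (X 1 ⁻¹' Set.Iic (min x y)) ^ i := by
            rw [Finset.prod_const, Nat.card_Ioc, Nat.sub_zero]
    have e2 : ∏ m ∈ Finset.Ioc i j, P (X 1 ⁻¹' Set.Iic (c m))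
        = P (X 1 ⁻¹' Set.Iic y) ^ (j - i) := by
      calc ∏ m ∈ Finset.Ioc i j, P (X 1 ⁻¹' Set.Iic (c m))
          = ∏ m ∈ Finset.Ioc i j, P (X 1 ⁻¹' Set.Iic y) :=
            Finset.prod_congr rfl fun m hm =>
              by rw [hcgt m (not_le.mpr (Finset.mem_Ioc.mp hm).1)]
        _ = P (X 1 ⁻¹' Set.Iic y) ^ (j - i) := by rw [Finset.prod_const, Nat.card_Ioc]
    rw [e1, e2, ENNReal.toReal_mul, ENNReal.toReal_pow, ENNReal.toReal_pow, hF, hF]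
  -- F bounds
  have hF0 : ∀ t, 0 ≤ F t := fun t => by rw [hF]; exact ENNReal.toReal_nonneg
  have hF1 : ∀ t, F t ≤ 1 := by
    intro t
    rw [hF]
    have h1 : P (X 1 ⁻¹' Set.Iic t) ≤ 1 := prob_le_one
    exact le_trans (ENNReal.toReal_mono ENNReal.one_ne_top h1) (by simp)
  -- Apply Hoeffding's formula
  obtain ⟨hDint, hDeq⟩ := hoeffding_formula P (hYm i hi) (hYm j hj) (hY2 i hi) (hY2 j hj)
  set D' : ℝ × ℝ → ℝ :=
    fun p => F (min p.1 p.2) ^ i * F p.2 ^ (j - i) - F p.1 ^ i * F p.2 ^ j with hD'def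
  have hptD : ∀ p : ℝ × ℝ, (P {ω | Y i ω ≤ p.1 ∧ Y j ω ≤ p.2}).toReal
      - (P {ω | Y i ω ≤ p.1}).toReal * (P {ω | Y j ω ≤ p.2}).toReal = D' p := by
    intro p
    rw [hjoint p.1 p.2, hmarg i hi p.1, hmarg j hj p.2, hD'def]
  have hD'int : Integrable D' volume :=
    hDint.congr (Filter.Eventually.of_forall hptD)
  have hcov : (∫ ω, (Y i ω - ∫ ω', Y i ω' ∂P) * (Y j ω - ∫ ω', Y j ω' ∂P) ∂P)
      = ∫ p : ℝ × ℝ, D' p := by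
    rw [hDeq]
    exact integral_congr_ae (Filter.Eventually.of_forall hptD)
  -- region splitting
  set T : Set (ℝ × ℝ) := {p : ℝ × ℝ | p.1 < p.2} with hTdef
  set T' : Set (ℝ × ℝ) := {p : ℝ × ℝ | p.2 < p.1} with hT'def
  have mT : MeasurableSet T := measurableSet_lt measurable_fst measurable_snd
  have mT' : MeasurableSet T' := measurableSet_lt measurable_snd measurable_fst
  have hdiag : volume {p : ℝ × ℝ | p.1 = p.2} = 0 := by
    have hmd : MeasurableSet {p : ℝ × ℝ | p.1 = p.2} :=
      measurableSet_eq_fun measurable_fst measurable_snd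
    rw [hvol, Measure.prod_apply hmd]
    have : ∀ x : ℝ, (Prod.mk x ⁻¹' {p : ℝ × ℝ | p.1 = p.2}) = {x} := by
      intro x; ext y; simp [eq_comm]
    simp only [this]
    simp [Real.volume_singleton]
  have hTc : (Tᶜ : Set (ℝ × ℝ)) =ᵐ[volume] T' := by
    rw [MeasureTheory.ae_eq_set]
    constructor
    · refine measure_mono_null ?_ hdiag
      intro p hp
      simp only [Set.mem_diff, Set.mem_compl_iff, hTdef, hT'def, Set.mem_setOf_eq, not_lt] at hp
      exact le_antisymm hp.2 hp.1
    · have he : T' \ (Tᶜ : Set (ℝ × ℝ)) = ∅ := by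
        apply Set.diff_eq_empty.mpr
        intro p hp
        simp only [hT'def, Set.mem_setOf_eq] at hp
        simp only [hTdef, Set.mem_compl_iff, Set.mem_setOf_eq, not_lt]
        exact hp.le
      rw [he, measure_empty]
  -- the two pieces
  set Dlt : ℝ × ℝ → ℝ := fun p => F p.1 ^ i * F p.2 ^ (j - i) * (1 - F p.2 ^ i) with hDltdef
  set Dgt : ℝ × ℝ → ℝ := fun p => F p.2 ^ i * F p.2 ^ (j - i) * (1 - F p.1 ^ i) with hDgtdef
  have hpowj : ∀ t : ℝ, F t ^ j = F t ^ i * F t ^ (j - i) := by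
    intro t
    rw [← pow_add, Nat.add_sub_cancel' hij]
  have heqlt : Set.EqOn D' Dlt T := by
    intro p hp
    simp only [hTdef, Set.mem_setOf_eq] at hp
    rw [hD'def, hDltdef]
    simp only [min_eq_left hp.le]
    rw [hpowj p.2]
    ring
  have heqgt : Set.EqOn D' Dgt T' := by
    intro p hp
    simp only [hT'def, Set.mem_setOf_eq] at hp
    rw [hD'def, hDgtdef]
    simp only [min_eq_right hp.le]
    rw [hpowj p.2]
    ring
  have hswap : MeasurePreserving (Prod.swap : ℝ × ℝ → ℝ × ℝ) volume volume := by
    rw [hvol]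
    exact Measure.measurePreserving_swap
  have hswapemb : MeasurableEmbedding (Prod.swap : ℝ × ℝ → ℝ × ℝ) :=
    MeasurableEquiv.prodComm.measurableEmbedding
  have himg : (Prod.swap : ℝ × ℝ → ℝ × ℝ) '' T = T' := by
    rw [Set.image_swap_eq_preimage_swap]
    ext p
    simp [hTdef, hT'def]
  -- integrability pieces
  have iDlt : IntegrableOn Dlt T volume := (hD'int.integrableOn).congr_fun heqlt mT
  have iDgt : IntegrableOn Dgt T' volume := (hD'int.integrableOn).congr_fun heqgt mT'
  have hswapT : MeasurePreserving (Prod.swap : ℝ × ℝ → ℝ × ℝ)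
      (volume.restrict T) (volume.restrict T') := by
    have := hswap.restrict_image_emb hswapemb T
    rwa [himg] at this
  have iDgtswap : IntegrableOn (fun p => Dgt (Prod.swap p)) T volume := by
    have := (hswapT.integrable_comp_emb hswapemb (g := Dgt)).mpr iDgt
    exact this
  have hkey : ∀ p : ℝ × ℝ, Dlt p + Dgt (Prod.swap p)
      = F p.1 ^ i * (F p.1 ^ (j - i) + F p.2 ^ (j - i)) * (1 - F p.2 ^ i) := by
    intro p
    rw [hDltdef, hDgtdef]
    simp only [Prod.fst_swap, Prod.snd_swap]
    ring
  have hIntTarget : IntegrableOn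
      (fun p : ℝ × ℝ => F p.1 ^ i * (F p.1 ^ (j - i) + F p.2 ^ (j - i)) * (1 - F p.2 ^ i))
      T volume := by
    refine (iDlt.add iDgtswap).congr (Filter.Eventually.of_forall fun p => hkey p)
  -- the integral computation
  have hsplit : (∫ p : ℝ × ℝ, D' p)
      = (∫ p in T, D' p) + ∫ p in T', D' p := by
    rw [← integral_add_compl mT hD'int, setIntegral_congr_set hTc]
  have hI1 : (∫ p in T, D' p) = ∫ p in T, Dlt p := setIntegral_congr_fun mT heqlt
  have hI2 : (∫ p in T', D' p) = ∫ p in T', Dgt p := setIntegral_congr_fun mT' heqgt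
  have hI3 : (∫ p in T', Dgt p) = ∫ p in T, Dgt (Prod.swap p) := by
    rw [← himg]
    exact hswap.setIntegral_image_emb hswapemb Dgt T
  have hItot : (∫ p : ℝ × ℝ, D' p)
      = ∫ p in T, (F p.1 ^ i * (F p.1 ^ (j - i) + F p.2 ^ (j - i)) * (1 - F p.2 ^ i)) := by
    rw [hsplit, hI1, hI2, hI3, ← integral_add iDlt iDgtswap]
    exact integral_congr_ae (Filter.Eventually.of_forall fun p => hkey p)
  refine ⟨hIntTarget, ?_, ?_⟩
  · rw [hcov, hItot]
  · rw [hcov, hItot]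
    refine setIntegral_nonneg mT fun p _ => ?_
    have h1 : (0:ℝ) ≤ F p.1 ^ i := pow_nonneg (hF0 p.1) i
    have h2 : (0:ℝ) ≤ F p.1 ^ (j - i) + F p.2 ^ (j - i) :=
      add_nonneg (pow_nonneg (hF0 p.1) _) (pow_nonneg (hF0 p.2) _)
    have h3 : (0:ℝ) ≤ 1 - F p.2 ^ i :=
      sub_nonneg.mpr (pow_le_one₀ (hF0 p.2) (hF1 p.2))
    exact mul_nonneg (mul_nonneg h1 h2) h3
end

section
/- For i.i.d. random variables X_1, ..., X_{i+1} with common distribution function F, the pushforward measure dF^{i+1} is absolutely continuous with respect to dF with Radon-Nikodym derivative h_{i+1}(x) = Σ_{j=0}^{i} F^j(x) F^{i-j}(x-), where F(x-) denotes the left limit of F at x. That is, for every Borel set B, ∫_B dF^{i+1}(x) = ∫_B h_{i+1}(x) dF(x). -/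
open MeasureTheory ProbabilityTheory Set
open scoped ENNReal

lemma aux_sup'_univ {α : Type*} [SemilatticeSup α] (s : Finset ℕ) (hs : s.Nonempty) (f : ℕ → α) :
    (Finset.univ.sup'
      (by rw [Finset.univ_eq_attach]; exact Finset.attach_nonempty_iff.mpr hs)
      fun i : ↥s => f i) = s.sup' hs f := by
  apply le_antisymm
  · exact Finset.sup'_le _ _ fun i _ => Finset.le_sup' f i.2
  · exact Finset.sup'_le _ _ fun j hj =>
      Finset.le_sup' (fun i : ↥s => f ↑i) (Finset.mem_univ (⟨j, hj⟩ : ↥s))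

lemma aux_Icc_succ (n : ℕ) (hn : 1 ≤ n) :
    Finset.Icc 1 (n + 1) = insert (n + 1) (Finset.Icc 1 n) := by
  ext j; simp [Finset.mem_Icc]; omega

/-- The law of `max{X_1,...,X_{i+1}}` is absolutely continuous w.r.t. the common law of the
`X_k`, with Radon–Nikodym derivative `h_{i+1}(x) = Σ_{j=0}^{i} F(x)^j F(x-)^{i-j}`. -/
theorem law_of_max_radon_nikodym
    {Ω : Type*} [MeasurableSpace Ω] (P : Measure Ω) [IsProbabilityMeasure P]
    (X : ℕ → Ω → ℝ) (hmeas : ∀ k, Measurable (X k))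
    (hindep : iIndepFun X P)
    (hid : ∀ k, P.map (X k) = P.map (X 1))
    (F : ℝ → ℝ) (hF : ∀ x, F x = (P (X 1 ⁻¹' Set.Iic x)).toReal)
    (Fm : ℝ → ℝ) (hFm : ∀ x, Fm x = (P (X 1 ⁻¹' Set.Iio x)).toReal)
    (Y : ℕ → Ω → ℝ) (hY1 : Y 1 = X 1)
    (hYs : ∀ k, 1 ≤ k → ∀ ω, Y (k + 1) ω = max (Y k ω) (X (k + 1) ω))
    (i : ℕ) :
    ∀ B : Set ℝ, MeasurableSet B →
      (P.map (Y (i + 1))) B =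
        ENNReal.ofReal
          (∫ x in B, (∑ j ∈ Finset.range (i + 1), F x ^ j * Fm x ^ (i - j))
            ∂(P.map (X 1))) := by
  classical
  -- Y k is the sup of X_1, ..., X_k
  have hYsup : ∀ k, ∀ hk : 1 ≤ k, ∀ ω,
      Y k ω = (Finset.Icc 1 k).sup' (Finset.nonempty_Icc.mpr hk) (fun j => X j ω) := by
    intro k
    induction k with
    | zero => intro hk; omega
    | succ n ih =>
      intro hk ω
      by_cases hn : 1 ≤ n
      · rw [hYs n hn ω, ih hn ω]
        rw [Finset.sup'_congr _ (aux_Icc_succ n hn) (fun _ _ => rfl),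
          Finset.sup'_insert]
        exact max_comm _ _
      · have : n = 0 := by omega
        subst this
        rw [hY1]
        simp
  have hYmeas : ∀ k, 1 ≤ k → Measurable (Y k) := by
    intro k hk
    have : Y k = (Finset.Icc 1 k).sup' (Finset.nonempty_Icc.mpr hk) (fun j => X j) := by
      funext ω
      rw [hYsup k hk ω, Finset.sup'_apply]
    rw [this]
    exact Finset.measurable_sup' _ fun n _ => hmeas n
  -- independence of Y k and X (k+1)
  have hindepYX : ∀ k, 1 ≤ k → IndepFun (Y k) (X (k + 1)) P := by
    intro k hk
    have hd : Disjoint (Finset.Icc 1 k) ({k + 1} : Finset ℕ) := by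
      simp only [Finset.disjoint_singleton_right, Finset.mem_Icc]
      omega
    have h := hindep.indepFun_finset (Finset.Icc 1 k) {k + 1} hd hmeas
    have hne : (Finset.Icc 1 k).Nonempty := Finset.nonempty_Icc.mpr hk
    have huniv : (Finset.univ : Finset ↥(Finset.Icc 1 k)).Nonempty := by
      rw [Finset.univ_eq_attach]; exact Finset.attach_nonempty_iff.mpr hne
    set φ : (↥(Finset.Icc 1 k) → ℝ) → ℝ := fun v => Finset.univ.sup' huniv v with hφ
    have hφm : Measurable φ := by
      have hφ2 : φ = Finset.univ.sup' huniv (fun i (f : ↥(Finset.Icc 1 k) → ℝ) => f i) := by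
        funext v; rw [Finset.sup'_apply]
      rw [hφ2]
      exact Finset.measurable_sup' _ fun i _ => measurable_pi_apply i
    set ψ : (↥({k + 1} : Finset ℕ) → ℝ) → ℝ :=
      fun v => v ⟨k + 1, Finset.mem_singleton_self _⟩ with hψ
    have hψm : Measurable ψ := measurable_pi_apply _
    have h2 := h.comp hφm hψm
    have e1 : φ ∘ (fun a (i : ↥(Finset.Icc 1 k)) => X i a) = Y k := by
      funext ω
      show (Finset.univ.sup' huniv fun i : ↥(Finset.Icc 1 k) => X i ω) = Y k ω
      rw [aux_sup'_univ _ hne (fun j => X j ω), hYsup k hk ω]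
    have e2 : ψ ∘ (fun a (i : ↥({k + 1} : Finset ℕ)) => X i a) = X (k + 1) := rfl
    rwa [e1, e2] at h2
  -- the common law and its (left-)distribution functions, in ℝ≥0∞
  set μ : Measure ℝ := P.map (X 1) with hμ
  haveI : IsProbabilityMeasure μ := Measure.isProbabilityMeasure_map (hmeas 1).aemeasurable
  set g : ℝ → ℝ≥0∞ := fun x => μ (Iic x) with hg
  set gm : ℝ → ℝ≥0∞ := fun x => μ (Iio x) with hgm
  have hFmeas : Measurable F := by
    have : Monotone F := by
      intro a b hab
      rw [hF a, hF b]
      exact ENNReal.toReal_mono (measure_ne_top P _)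
        (measure_mono (preimage_mono (Iic_subset_Iic.mpr hab)))
    exact this.measurable
  have hFmmeas : Measurable Fm := by
    have : Monotone Fm := by
      intro a b hab
      rw [hFm a, hFm b]
      exact ENNReal.toReal_mono (measure_ne_top P _)
        (measure_mono (preimage_mono (Iio_subset_Iio hab)))
    exact this.measurable
  have hFg : ∀ x, ENNReal.ofReal (F x) = g x := by
    intro x
    rw [hF x, ← Measure.map_apply (hmeas 1) measurableSet_Iic]
    exact ENNReal.ofReal_toReal (measure_ne_top μ _)
  have hFmg : ∀ x, ENNReal.ofReal (Fm x) = gm x := by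
    intro x
    rw [hFm x, ← Measure.map_apply (hmeas 1) measurableSet_Iio]
    exact ENNReal.ofReal_toReal (measure_ne_top μ _)
  have hgmeas : Measurable g := by
    have : g = fun x => ENNReal.ofReal (F x) := by funext x; rw [hFg x]
    rw [this]; exact ENNReal.measurable_ofReal.comp hFmeas
  have hgmmeas : Measurable gm := by
    have : gm = fun x => ENNReal.ofReal (Fm x) := by funext x; rw [hFmg x]
    rw [this]; exact ENNReal.measurable_ofReal.comp hFmmeas
  -- the distribution of Y k on Iio
  have hIio : ∀ k, 1 ≤ k → ∀ x, P.map (Y k) (Iio x) = gm x ^ k := by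
    intro k
    induction k with
    | zero => omega
    | succ n ih =>
      intro _ x
      by_cases hn : 1 ≤ n
      · have hpre : Y (n + 1) ⁻¹' Iio x = Y n ⁻¹' Iio x ∩ X (n + 1) ⁻¹' Iio x := by
          ext ω
          simp only [mem_preimage, mem_Iio, mem_inter_iff, hYs n hn ω, max_lt_iff]
        rw [Measure.map_apply (hYmeas _ (by omega)) measurableSet_Iio, hpre,
          (hindepYX n hn).measure_inter_preimage_eq_mul _ _ measurableSet_Iio measurableSet_Iio,
          ← Measure.map_apply (hYmeas n hn) measurableSet_Iio, ih hn x,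
          ← Measure.map_apply (hmeas (n + 1)) measurableSet_Iio, hid (n + 1)]
        rw [pow_succ]
      · have : n = 0 := by omega
        subst this
        rw [hY1, pow_one]
  -- the main density formula, in ℝ≥0∞
  have main : ∀ m : ℕ, ∀ B : Set ℝ, MeasurableSet B →
      P.map (Y (m + 1)) B
        = ∫⁻ x in B, ∑ j ∈ Finset.range (m + 1), g x ^ j * gm x ^ (m - j) ∂μ := by
    intro m
    induction m with
    | zero =>
      intro B hB
      have : ∀ x : ℝ, (∑ j ∈ Finset.range 1, g x ^ j * gm x ^ (0 - j)) = 1 := by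
        intro x; simp
      simp only [this]
      rw [hY1, setLIntegral_one]
    | succ n ih =>
      intro B hB
      set h : ℝ → ℝ≥0∞ := fun x => ∑ j ∈ Finset.range (n + 1), g x ^ j * gm x ^ (n - j)
        with hh
      have hhmeas : Measurable h :=
        Finset.measurable_sum _ fun j _ => (hgmeas.pow_const j).mul (hgmmeas.pow_const (n - j))
      have hν : P.map (Y (n + 1)) = μ.withDensity h := by
        ext s hs
        rw [withDensity_apply _ hs, ih s hs]
      have hYm : Measurable (Y (n + 1)) := hYmeas _ (by omega)
      haveI : IsProbabilityMeasure (P.map (Y (n + 1))) :=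
        Measure.isProbabilityMeasure_map hYm.aemeasurable
      have hjoint : P.map (fun ω => (Y (n + 1) ω, X (n + 2) ω))
          = (P.map (Y (n + 1))).prod μ := by
        rw [(indepFun_iff_map_prod_eq_prod_map_map hYm.aemeasurable
          (hmeas (n + 2)).aemeasurable).mp (hindepYX (n + 1) (by omega)), hid (n + 2)]
      set A1 : Set (ℝ × ℝ) := {p | p.1 ∈ B ∧ p.2 ≤ p.1} with hA1
      set A2 : Set (ℝ × ℝ) := {p | p.2 ∈ B ∧ p.1 < p.2} with hA2
      have hA1m : MeasurableSet A1 :=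
        (hB.preimage measurable_fst).inter (measurableSet_le measurable_snd measurable_fst)
      have hA2m : MeasurableSet A2 :=
        (hB.preimage measurable_snd).inter (measurableSet_lt measurable_fst measurable_snd)
      have hpre : Y (n + 2) ⁻¹' B = (fun ω => (Y (n + 1) ω, X (n + 2) ω)) ⁻¹' (A1 ∪ A2) := by
        ext ω
        have hmax := hYs (n + 1) (by omega) ω
        simp only [mem_preimage, mem_union, hA1, hA2, mem_setOf_eq, hmax]
        by_cases hc : X (n + 2) ω ≤ Y (n + 1) ω
        · simp [max_eq_left hc, hc, not_lt.mpr hc]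
        · push_neg at hc
          simp [max_eq_right hc.le, hc, not_le.mpr hc]
      have hdisj : Disjoint A1 A2 := by
        rw [Set.disjoint_left]
        rintro p ⟨-, h1⟩ ⟨-, h2⟩
        exact absurd h2 (not_lt.mpr h1)
      -- split the measure
      have hsplit : P.map (Y (n + 2)) B
          = ((P.map (Y (n + 1))).prod μ) A1 + ((P.map (Y (n + 1))).prod μ) A2 := by
        rw [Measure.map_apply (hYmeas (n + 2) (by omega)) hB, hpre,
          ← Measure.map_apply (hYm.prodMk (hmeas (n + 2))) (hA1m.union hA2m), hjoint,
          measure_union hdisj hA2m]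
      -- first piece
      have hpiece1 : ((P.map (Y (n + 1))).prod μ) A1 = ∫⁻ x in B, h x * g x ∂μ := by
        rw [Measure.prod_apply hA1m]
        have hsec : ∀ y : ℝ, μ (Prod.mk y ⁻¹' A1) = B.indicator g y := by
          intro y
          by_cases hy : y ∈ B
          · have : Prod.mk y ⁻¹' A1 = Iic y := by ext x; simp [hA1, hy]
            rw [this, indicator_of_mem hy]
          · have : Prod.mk y ⁻¹' A1 = ∅ := by ext x; simp [hA1, hy]
            rw [this, indicator_of_notMem hy, measure_empty]
        simp only [hsec]
        rw [lintegral_indicator hB, hν,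
          setLIntegral_withDensity_eq_setLIntegral_mul μ hhmeas hgmeas hB]
        rfl
      -- second piece
      have hpiece2 : ((P.map (Y (n + 1))).prod μ) A2
          = ∫⁻ x in B, gm x ^ (n + 1) ∂μ := by
        rw [Measure.prod_apply_symm hA2m]
        have hsec : ∀ x : ℝ, (P.map (Y (n + 1))) ((fun y => (y, x)) ⁻¹' A2)
            = B.indicator (fun x => gm x ^ (n + 1)) x := by
          intro x
          by_cases hx : x ∈ B
          · have : (fun y => (y, x)) ⁻¹' A2 = Iio x := by ext y; simp [hA2, hx]
            rw [this, indicator_of_mem hx, hIio (n + 1) (by omega) x]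
          · have : (fun y => (y, x)) ⁻¹' A2 = ∅ := by ext y; simp [hA2, hx]
            rw [this, indicator_of_notMem hx, measure_empty]
        simp only [hsec]
        rw [lintegral_indicator hB]
      rw [hsplit, hpiece1, hpiece2, ← lintegral_add_left (f := fun x => h x * g x) (hhmeas.mul hgmeas)]
      refine setLIntegral_congr_fun_ae hB (Filter.Eventually.of_forall fun x _ => ?_)
      rw [Finset.sum_range_succ' (fun j => g x ^ j * gm x ^ (n + 1 - j)) (n + 1)]
      simp only [pow_zero, one_mul, Nat.sub_zero]
      congr 1
      rw [hh, Finset.sum_mul]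
      refine Finset.sum_congr rfl fun j hj => ?_
      have hsub : n + 1 - (j + 1) = n - j := by omega
      rw [hsub, pow_succ]
      ring
  -- conversion to the Bochner integral statement
  intro B hB
  rw [main i B hB]
  have hFnn : ∀ x, 0 ≤ F x := fun x => by rw [hF x]; exact ENNReal.toReal_nonneg
  have hFmnn : ∀ x, 0 ≤ Fm x := fun x => by rw [hFm x]; exact ENNReal.toReal_nonneg
  have hFle : ∀ x, F x ≤ 1 := by
    intro x
    rw [hF x]
    calc (P (X 1 ⁻¹' Iic x)).toReal ≤ (1 : ℝ≥0∞).toReal :=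
          ENNReal.toReal_mono ENNReal.one_ne_top prob_le_one
      _ = 1 := ENNReal.toReal_one
  have hFmle : ∀ x, Fm x ≤ 1 := by
    intro x
    rw [hFm x]
    calc (P (X 1 ⁻¹' Iio x)).toReal ≤ (1 : ℝ≥0∞).toReal :=
          ENNReal.toReal_mono ENNReal.one_ne_top prob_le_one
      _ = 1 := ENNReal.toReal_one
  set f : ℝ → ℝ := fun x => ∑ j ∈ Finset.range (i + 1), F x ^ j * Fm x ^ (i - j) with hf2
  have hfmeas : Measurable f :=
    Finset.measurable_sum _ fun j _ => (hFmeas.pow_const j).mul (hFmmeas.pow_const (i - j))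
  have hfnn : ∀ x, 0 ≤ f x :=
    fun x => Finset.sum_nonneg fun j _ =>
      mul_nonneg (pow_nonneg (hFnn x) j) (pow_nonneg (hFmnn x) (i - j))
  have hfint : Integrable f (μ.restrict B) := by
    refine Integrable.mono' (integrable_const ((i : ℝ) + 1)) hfmeas.aestronglyMeasurable
      (Filter.Eventually.of_forall fun x => ?_)
    rw [Real.norm_eq_abs, abs_of_nonneg (hfnn x)]
    calc f x ≤ ∑ j ∈ Finset.range (i + 1), (1 : ℝ) := by
          refine Finset.sum_le_sum fun j _ => ?_
          have h1 : F x ^ j ≤ 1 := pow_le_one₀ (hFnn x) (hFle x)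
          have h2 : Fm x ^ (i - j) ≤ 1 := pow_le_one₀ (hFmnn x) (hFmle x)
          calc F x ^ j * Fm x ^ (i - j) ≤ 1 * 1 :=
                mul_le_mul h1 h2 (pow_nonneg (hFmnn x) _) zero_le_one
            _ = 1 := one_mul 1
      _ = (i : ℝ) + 1 := by simp
  rw [ofReal_integral_eq_lintegral_ofReal hfint
    (Filter.Eventually.of_forall fun x => hfnn x)]
  refine lintegral_congr fun x => ?_
  rw [hf2]
  rw [ENNReal.ofReal_sum_of_nonneg fun j _ =>
    mul_nonneg (pow_nonneg (hFnn x) j) (pow_nonneg (hFmnn x) (i - j))]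
  refine Finset.sum_congr rfl fun j _ => ?_
  rw [ENNReal.ofReal_mul (pow_nonneg (hFnn x) j), ENNReal.ofReal_pow (hFnn x),
    ENNReal.ofReal_pow (hFmnn x), hFg, hFmg]
end

section
/- The distribution function F(x) = 0 for x ≤ 0, F(x) = x/4 for 0 ≤ x < 1, F(x) = 1 for x ≥ 1 (which is log-concave on (0,1) but has an atom at its right end-point x = 1) has partial maxima spacings with Cov[Z_1, Z_2] = 59/184320 > 0. -/
open MeasureTheory ProbabilityTheory Set

open scoped ENNReal

noncomputable section CovAux

def nuC : Measure ℝ :=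
  ((4 : ℝ≥0∞)⁻¹) • (volume.restrict (Set.Ioo 0 1)) + ((3 : ℝ≥0∞)/4) • Measure.dirac 1

instance : IsProbabilityMeasure nuC := by
  constructor
  simp [nuC, Real.volume_Ioo]
  rw [← one_div, ENNReal.div_add_div_same, show (1:ℝ≥0∞)+3 = 4 by norm_num]
  exact ENNReal.div_self (by norm_num) (by norm_num)

lemma nuC_restrict : nuC.restrict (Set.Icc 0 1) = nuC := by
  rw [nuC, Measure.restrict_add, Measure.restrict_smul, Measure.restrict_smul,
    Measure.restrict_restrict measurableSet_Icc,
    inter_eq_self_of_subset_right Set.Ioo_subset_Icc_self]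
  classical
  rw [restrict_dirac' measurableSet_Icc]
  simp

lemma nuC_ae_Icc : ∀ᵐ x ∂nuC, x ∈ Set.Icc (0:ℝ) 1 := by
  rw [← nuC_restrict]
  exact ae_restrict_mem measurableSet_Icc

lemma integrable_of_compact {α : Type*} [MeasurableSpace α] [TopologicalSpace α]
    [OpensMeasurableSpace α] [T2Space α] {μ : Measure α} [IsFiniteMeasure μ] {K : Set α}
    (hK : IsCompact K) (hμ : μ.restrict K = μ) {f : α → ℝ} (hf : Continuous f) :
    Integrable f μ := by
  obtain ⟨C, hC⟩ := hK.exists_bound_of_continuousOn hf.continuousOn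
  rw [← hμ]
  exact Integrable.mono' (integrable_const C) hf.aestronglyMeasurable
    ((ae_restrict_mem hK.measurableSet).mono fun x hx => hC x hx)

lemma integrable_nuC {f : ℝ → ℝ} (hf : Continuous f) : Integrable f nuC :=
  integrable_of_compact isCompact_Icc nuC_restrict hf

lemma int_nuC {f : ℝ → ℝ} (hf : Continuous f) :
    ∫ x, f x ∂nuC = (1/4) * (∫ x in (0:ℝ)..1, f x) + (3/4) * f 1 := by
  have hi := integrable_nuC hf
  rw [nuC] at hi ⊢
  rw [integral_add_measure ((integrable_add_measure.mp hi).1) ((integrable_add_measure.mp hi).2),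
    integral_smul_measure, integral_smul_measure, integral_dirac]
  rw [intervalIntegral.integral_of_le zero_le_one, MeasureTheory.integral_Ioc_eq_integral_Ioo]
  simp [ENNReal.toReal_inv, ENNReal.toReal_div]
  try ring

lemma nuC_Iic (x : ℝ) :
    nuC (Set.Iic x) = ENNReal.ofReal (if x < 0 then 0 else if x < 1 then x / 4 else 1) := by
  classical
  rw [nuC, Measure.add_apply, Measure.smul_apply, Measure.smul_apply,
    Measure.restrict_apply measurableSet_Iic, Measure.dirac_apply' _ measurableSet_Iic]
  by_cases h0 : x < 0
  · have h1 : Set.Iic x ∩ Set.Ioo (0:ℝ) 1 = ∅ := by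
      ext y; simp only [mem_inter_iff, mem_Iic, mem_Ioo, mem_empty_iff_false, iff_false]
      rintro ⟨hy, hy0, -⟩; linarith
    have h2 : (1:ℝ) ∉ Set.Iic x := by simp; linarith
    simp [h0, h1, h2]
  · push_neg at h0
    by_cases h1 : x < 1
    · have hs : Set.Iic x ∩ Set.Ioo (0:ℝ) 1 = Set.Ioc 0 x := by
        ext y
        simp only [mem_inter_iff, mem_Iic, mem_Ioo, mem_Ioc]
        constructor
        · rintro ⟨hy, hy0, -⟩; exact ⟨hy0, hy⟩
        · rintro ⟨hy0, hy⟩; exact ⟨hy, hy0, lt_of_le_of_lt hy h1⟩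
      have h2 : (1:ℝ) ∉ Set.Iic x := by simp; linarith
      simp only [h0.not_gt, h1, if_true, if_false, hs, Real.volume_Ioc, smul_eq_mul, sub_zero]
      rw [Set.indicator_of_notMem h2, mul_zero, add_zero,
        ENNReal.ofReal_div_of_pos (by norm_num), ENNReal.div_eq_inv_mul]
      simp [ENNReal.ofReal_ofNat]
    · push_neg at h1
      have hs : Set.Iic x ∩ Set.Ioo (0:ℝ) 1 = Set.Ioo 0 1 := by
        rw [inter_eq_self_of_subset_right]
        intro y hy; exact le_trans hy.2.le h1
      have h2 : (1:ℝ) ∈ Set.Iic x := by simpa using h1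
      simp only [not_lt.mpr h0, not_lt.mpr h1, if_false, hs, Real.volume_Ioo, h2,
        indicator_of_mem, smul_eq_mul, mul_one, sub_zero]
      rw [ENNReal.ofReal_one]
      simp only [Pi.one_apply, mul_one, one_mul]
      rw [← one_div, ENNReal.div_add_div_same, show (1:ℝ≥0∞)+3 = 4 by norm_num]
      exact ENNReal.div_self (by norm_num) (by norm_num)

lemma poly_int (c0 c1 c2 c3 c4 : ℝ) (a b : ℝ) :
    ∫ y in a..b, (c0 + c1 * y + c2 * y ^ 2 + c3 * y ^ 3 + c4 * y ^ 4) =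
      c0 * (b - a) + c1 * (b^2 - a^2)/2 + c2 * (b^3 - a^3)/3 + c3 * (b^4 - a^4)/4
        + c4 * (b^5 - a^5)/5 := by
  have i1 : IntervalIntegrable (fun _ : ℝ => c0) volume a b := intervalIntegrable_const
  have i2 : IntervalIntegrable (fun y : ℝ => c1 * y) volume a b :=
    (continuous_const.mul continuous_id).intervalIntegrable _ _
  have i3 : IntervalIntegrable (fun y : ℝ => c2 * y ^ 2) volume a b :=
    (continuous_const.mul (continuous_pow 2)).intervalIntegrable _ _
  have i4 : IntervalIntegrable (fun y : ℝ => c3 * y ^ 3) volume a b :=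
    (continuous_const.mul (continuous_pow 3)).intervalIntegrable _ _
  have i5 : IntervalIntegrable (fun y : ℝ => c4 * y ^ 4) volume a b :=
    (continuous_const.mul (continuous_pow 4)).intervalIntegrable _ _
  rw [intervalIntegral.integral_add (((i1.add i2).add i3).add i4) i5,
    intervalIntegral.integral_add ((i1.add i2).add i3) i4,
    intervalIntegral.integral_add (i1.add i2) i3,
    intervalIntegral.integral_add i1 i2,
    intervalIntegral.integral_const, intervalIntegral.integral_const_mul,
    intervalIntegral.integral_const_mul, intervalIntegral.integral_const_mul,
    intervalIntegral.integral_const_mul]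
  simp
  push_cast
  ring

def gA : ℝ → ℝ := fun m => 7/8 - m + m^2/8

lemma gA_cont : Continuous gA := by unfold gA; fun_prop

lemma gA_one : gA 1 = 0 := by norm_num [gA]

def HC : ℝ → ℝ := fun x => 13/96 - 5*x/12 + 7*x^2/16 - x^3/6 + x^4/96

def KC : ℝ → ℝ := fun x => 5/12 - x^2/2 + x^3/12

lemma intA (m : ℝ) (hm : m ∈ Set.Icc (0:ℝ) 1) :
    ∫ z, (max m z - m) ∂nuC = gA m := by
  have hc : Continuous fun z : ℝ => max m z - m := by fun_prop
  rw [int_nuC hc]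
  have hI1 : IntervalIntegrable (fun z : ℝ => max m z - m) volume 0 m :=
    hc.intervalIntegrable _ _
  have hI2 : IntervalIntegrable (fun z : ℝ => max m z - m) volume m 1 :=
    hc.intervalIntegrable _ _
  rw [← intervalIntegral.integral_add_adjacent_intervals hI1 hI2]
  have e1 : ∫ z in (0:ℝ)..m, (max m z - m) = 0 := by
    rw [intervalIntegral.integral_congr (g := fun _ => (0:ℝ))]
    · simp
    · intro z hz
      rw [Set.uIcc_of_le hm.1] at hz
      simp [max_eq_left hz.2]
  have e2 : ∫ z in m..(1:ℝ), (max m z - m) = ∫ z in m..(1:ℝ),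
      ((-m) + 1 * z + 0 * z ^ 2 + 0 * z ^ 3 + 0 * z ^ 4) := by
    apply intervalIntegral.integral_congr
    intro z hz
    rw [Set.uIcc_of_le hm.2] at hz
    simp only [max_eq_right hz.1]; ring
  rw [e1, e2, poly_int, max_eq_right hm.2]
  simp only [gA]; ring

lemma intC (x : ℝ) (hx : x ∈ Set.Icc (0:ℝ) 1) :
    ∫ y, ((max x y - x) * gA (max x y)) ∂nuC = (1/4) * HC x := by
  have hc : Continuous fun y : ℝ => (max x y - x) * gA (max x y) := by
    unfold gA; fun_prop
  rw [int_nuC hc]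
  have hI1 : IntervalIntegrable (fun y : ℝ => (max x y - x) * gA (max x y)) volume 0 x :=
    hc.intervalIntegrable _ _
  have hI2 : IntervalIntegrable (fun y : ℝ => (max x y - x) * gA (max x y)) volume x 1 :=
    hc.intervalIntegrable _ _
  rw [← intervalIntegral.integral_add_adjacent_intervals hI1 hI2]
  have e1 : ∫ y in (0:ℝ)..x, ((max x y - x) * gA (max x y)) = 0 := by
    rw [intervalIntegral.integral_congr (g := fun _ => (0:ℝ))]
    · simp
    · intro y hy
      rw [Set.uIcc_of_le hx.1] at hy
      simp [max_eq_left hy.2]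
  have e2 : ∫ y in x..(1:ℝ), ((max x y - x) * gA (max x y)) = ∫ y in x..(1:ℝ),
      ((-(7*x/8)) + (7/8 + x) * y + (-(1 + x/8)) * y ^ 2 + (1/8) * y ^ 3 + 0 * y ^ 4) := by
    apply intervalIntegral.integral_congr
    intro y hy
    rw [Set.uIcc_of_le hx.2] at hy
    simp only [max_eq_right hy.1, gA]; ring
  rw [e1, e2, poly_int, max_eq_right hx.2, gA_one]
  simp only [HC]; ring

lemma intB (x : ℝ) (hx : x ∈ Set.Icc (0:ℝ) 1) :
    ∫ y, gA (max x y) ∂nuC = (1/4) * KC x := by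
  have hc : Continuous fun y : ℝ => gA (max x y) := by unfold gA; fun_prop
  rw [int_nuC hc]
  have hI1 : IntervalIntegrable (fun y : ℝ => gA (max x y)) volume 0 x :=
    hc.intervalIntegrable _ _
  have hI2 : IntervalIntegrable (fun y : ℝ => gA (max x y)) volume x 1 :=
    hc.intervalIntegrable _ _
  rw [← intervalIntegral.integral_add_adjacent_intervals hI1 hI2]
  have e1 : ∫ y in (0:ℝ)..x, gA (max x y) = x * gA x := by
    rw [intervalIntegral.integral_congr (g := fun _ => gA x)]
    · simp [smul_eq_mul]
    · intro y hy
      rw [Set.uIcc_of_le hx.1] at hy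
      simp only [max_eq_left hy.2]
  have e2 : ∫ y in x..(1:ℝ), gA (max x y) = ∫ y in x..(1:ℝ),
      ((7/8) + (-1) * y + (1/8) * y ^ 2 + 0 * y ^ 3 + 0 * y ^ 4) := by
    apply intervalIntegral.integral_congr
    intro y hy
    rw [Set.uIcc_of_le hx.2] at hy
    simp only [max_eq_right hy.1, gA]; ring
  rw [e1, e2, poly_int, max_eq_right hx.2, gA_one]
  simp only [KC, gA]; ring

lemma topA : ∫ x, gA x ∂nuC = 5/48 := by
  rw [int_nuC gA_cont, gA_one]
  have : ∫ x in (0:ℝ)..1, gA x = ∫ x in (0:ℝ)..1,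
      ((7/8) + (-1) * x + (1/8) * x ^ 2 + 0 * x ^ 3 + 0 * x ^ 4) := by
    apply intervalIntegral.integral_congr
    intro y _; simp only [gA]; ring
  rw [this, poly_int]
  ring

lemma topB : ∫ x, ((1/4) * KC x) ∂nuC = 13/768 := by
  have hk : Continuous fun x : ℝ => (1/4) * KC x := by unfold KC; fun_prop
  rw [int_nuC hk]
  have : ∫ x in (0:ℝ)..1, ((1/4) * KC x) = ∫ x in (0:ℝ)..1,
      ((5/48) + 0 * x + (-(1/8)) * x ^ 2 + (1/48) * x ^ 3 + 0 * x ^ 4) := by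
    apply intervalIntegral.integral_congr
    intro y _; simp only [KC]; ring
  rw [this, poly_int]
  simp only [KC]; ring

lemma topC : ∫ x, ((1/4) * HC x) ∂nuC = 1/480 := by
  have hk : Continuous fun x : ℝ => (1/4) * HC x := by unfold HC; fun_prop
  rw [int_nuC hk]
  have : ∫ x in (0:ℝ)..1, ((1/4) * HC x) = ∫ x in (0:ℝ)..1,
      ((13/384) + (-(5/48)) * x + (7/64) * x ^ 2 + (-(1/24)) * x ^ 3 + (1/384) * x ^ 4) := by
    apply intervalIntegral.integral_congr
    intro y _; simp only [HC]; ring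
  rw [this, poly_int]
  simp only [HC]; ring

lemma nuC2_restrict :
    (nuC.prod nuC).restrict ((Set.Icc 0 1) ×ˢ (Set.Icc 0 1)) = nuC.prod nuC := by
  rw [← Measure.prod_restrict, nuC_restrict]

lemma nuC3_restrict :
    (nuC.prod (nuC.prod nuC)).restrict
      ((Set.Icc 0 1) ×ˢ ((Set.Icc 0 1) ×ˢ (Set.Icc 0 1))) = nuC.prod (nuC.prod nuC) := by
  rw [← Measure.prod_restrict, ← Measure.prod_restrict, nuC_restrict]

lemma integrable_nuC2 {f : ℝ × ℝ → ℝ} (hf : Continuous f) : Integrable f (nuC.prod nuC) :=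
  integrable_of_compact (isCompact_Icc.prod isCompact_Icc) nuC2_restrict hf

lemma integrable_nuC3 {f : ℝ × ℝ × ℝ → ℝ} (hf : Continuous f) :
    Integrable f (nuC.prod (nuC.prod nuC)) :=
  integrable_of_compact (isCompact_Icc.prod (isCompact_Icc.prod isCompact_Icc)) nuC3_restrict hf

lemma max_mem_Icc {x y : ℝ} (hx : x ∈ Set.Icc (0:ℝ) 1) (hy : y ∈ Set.Icc (0:ℝ) 1) :
    max x y ∈ Set.Icc (0:ℝ) 1 :=
  ⟨le_trans hx.1 (le_max_left _ _), max_le hx.2 hy.2⟩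

lemma tripleZ1 :
    ∫ p : ℝ × ℝ × ℝ, (max p.1 p.2.1 - p.1) ∂(nuC.prod (nuC.prod nuC)) = 5/48 := by
  calc ∫ p : ℝ × ℝ × ℝ, (max p.1 p.2.1 - p.1) ∂(nuC.prod (nuC.prod nuC))
      = ∫ x, ∫ q : ℝ × ℝ, (max x q.1 - x) ∂(nuC.prod nuC) ∂nuC :=
        MeasureTheory.integral_prod _ (integrable_nuC3 (by fun_prop))
    _ = ∫ x, gA x ∂nuC := by
        refine integral_congr_ae (nuC_ae_Icc.mono fun x hx => ?_)
        calc ∫ q : ℝ × ℝ, (max x q.1 - x) ∂(nuC.prod nuC)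
            = ∫ y, ∫ _ : ℝ, (max x y - x) ∂nuC ∂nuC :=
              MeasureTheory.integral_prod _ (integrable_nuC2 (by fun_prop))
          _ = ∫ y, (max x y - x) ∂nuC := by
              simp only [MeasureTheory.integral_const, measure_univ, probReal_univ, ENNReal.toReal_one, one_smul]
          _ = gA x := intA x hx
    _ = 5/48 := topA

lemma tripleZ2 :
    ∫ p : ℝ × ℝ × ℝ, (max (max p.1 p.2.1) p.2.2 - max p.1 p.2.1)
      ∂(nuC.prod (nuC.prod nuC)) = 13/768 := by
  calc ∫ p : ℝ × ℝ × ℝ, (max (max p.1 p.2.1) p.2.2 - max p.1 p.2.1) ∂(nuC.prod (nuC.prod nuC))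
      = ∫ x, ∫ q : ℝ × ℝ, (max (max x q.1) q.2 - max x q.1) ∂(nuC.prod nuC) ∂nuC :=
        MeasureTheory.integral_prod _ (integrable_nuC3 (by fun_prop))
    _ = ∫ x, ((1/4) * KC x) ∂nuC := by
        refine integral_congr_ae (nuC_ae_Icc.mono fun x hx => ?_)
        calc ∫ q : ℝ × ℝ, (max (max x q.1) q.2 - max x q.1) ∂(nuC.prod nuC)
            = ∫ y, ∫ z, (max (max x y) z - max x y) ∂nuC ∂nuC :=
              MeasureTheory.integral_prod _ (integrable_nuC2 (by fun_prop))
          _ = ∫ y, gA (max x y) ∂nuC := by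
              refine integral_congr_ae (nuC_ae_Icc.mono fun y hy => ?_)
              exact intA (max x y) (max_mem_Icc hx hy)
          _ = (1/4) * KC x := intB x hx
    _ = 13/768 := topB

lemma tripleZ12 :
    ∫ p : ℝ × ℝ × ℝ, ((max p.1 p.2.1 - p.1) * (max (max p.1 p.2.1) p.2.2 - max p.1 p.2.1))
      ∂(nuC.prod (nuC.prod nuC)) = 1/480 := by
  calc ∫ p : ℝ × ℝ × ℝ, ((max p.1 p.2.1 - p.1) * (max (max p.1 p.2.1) p.2.2 - max p.1 p.2.1))
        ∂(nuC.prod (nuC.prod nuC))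
      = ∫ x, ∫ q : ℝ × ℝ, ((max x q.1 - x) * (max (max x q.1) q.2 - max x q.1))
          ∂(nuC.prod nuC) ∂nuC :=
        MeasureTheory.integral_prod _ (integrable_nuC3 (by fun_prop))
    _ = ∫ x, ((1/4) * HC x) ∂nuC := by
        refine integral_congr_ae (nuC_ae_Icc.mono fun x hx => ?_)
        calc ∫ q : ℝ × ℝ, ((max x q.1 - x) * (max (max x q.1) q.2 - max x q.1)) ∂(nuC.prod nuC)
            = ∫ y, ∫ z, ((max x y - x) * (max (max x y) z - max x y)) ∂nuC ∂nuC :=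
              MeasureTheory.integral_prod _ (integrable_nuC2 (by fun_prop))
          _ = ∫ y, ((max x y - x) * gA (max x y)) ∂nuC := by
              refine integral_congr_ae (nuC_ae_Icc.mono fun y hy => ?_)
              show (∫ z, (max x y - x) * (max (max x y) z - max x y) ∂nuC)
                = (max x y - x) * gA (max x y)
              rw [MeasureTheory.integral_const_mul, intA (max x y) (max_mem_Icc hx hy)]
          _ = (1/4) * HC x := intC x hx
    _ = 1/480 := topC

end CovAux


/-- For the distribution function `F(x) = 0 (x ≤ 0), x/4 (0 ≤ x < 1), 1 (x ≥ 1)` (log-concave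
on `(0,1)` but with an atom at its right end-point), the partial maxima spacings satisfy
`Cov[Z₁, Z₂] = 59/184320 > 0`. -/
theorem counterexample_atom_positive_covariance
    {Ω : Type*} [MeasurableSpace Ω] (P : Measure Ω) [IsProbabilityMeasure P]
    (X : ℕ → Ω → ℝ) (hmeas : ∀ k, Measurable (X k))
    (hindep : iIndepFun X P)
    (hid : ∀ k, P.map (X k) = P.map (X 1))
    (hF : ∀ x : ℝ, (P (X 1 ⁻¹' Set.Iic x)).toReal =
      if x < 0 then 0 else if x < 1 then x / 4 else 1)
    (Y : ℕ → Ω → ℝ) (hY1 : Y 1 = X 1)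
    (hYs : ∀ k, 1 ≤ k → ∀ ω, Y (k + 1) ω = max (Y k ω) (X (k + 1) ω))
    (Z : ℕ → Ω → ℝ) (hZ : ∀ k, 1 ≤ k → ∀ ω, Z k ω = Y (k + 1) ω - Y k ω) :
    (∫ ω, (Z 1 ω - ∫ ω', Z 1 ω' ∂P) * (Z 2 ω - ∫ ω', Z 2 ω' ∂P) ∂P) = 59 / 184320 := by

  have hT : Measurable fun ω => (X 1 ω, (X 2 ω, X 3 ω)) :=
    (hmeas 1).prodMk ((hmeas 2).prodMk (hmeas 3))
  haveI : IsProbabilityMeasure (P.map (X 1)) :=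
    Measure.isProbabilityMeasure_map (hmeas 1).aemeasurable
  have law : P.map (X 1) = nuC := by
    refine Measure.ext_of_Iic _ _ fun a => ?_
    rw [Measure.map_apply (hmeas 1) measurableSet_Iic, nuC_Iic,
      ← hF a, ENNReal.ofReal_toReal (measure_ne_top P _)]
  have law2 : P.map (X 2) = nuC := (hid 2).trans law
  have law3 : P.map (X 3) = nuC := (hid 3).trans law
  have hp23 : P.map (fun ω => (X 2 ω, X 3 ω)) = nuC.prod nuC := by
    rw [(indepFun_iff_map_prod_eq_prod_map_map (hmeas 2).aemeasurable
      (hmeas 3).aemeasurable).mp (hindep.indepFun (by norm_num)), law2, law3]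
  have hind1 : IndepFun (X 1) (fun ω => (X 2 ω, X 3 ω)) P :=
    (hindep.indepFun_prodMk hmeas 2 3 1 (by norm_num) (by norm_num)).symm
  have triple : P.map (fun ω => (X 1 ω, (X 2 ω, X 3 ω))) = nuC.prod (nuC.prod nuC) := by
    rw [(indepFun_iff_map_prod_eq_prod_map_map (hmeas 1).aemeasurable
      ((hmeas 2).prodMk (hmeas 3)).aemeasurable).mp hind1, law, hp23]
  have key : ∀ f : ℝ × ℝ × ℝ → ℝ, Continuous f →
      (∫ ω, f (X 1 ω, (X 2 ω, X 3 ω)) ∂P = ∫ p, f p ∂(nuC.prod (nuC.prod nuC))) ∧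
        Integrable (fun ω => f (X 1 ω, (X 2 ω, X 3 ω))) P := by
    intro f hf
    constructor
    · rw [← MeasureTheory.integral_map hT.aemeasurable hf.aestronglyMeasurable, triple]
    · have h1 : Integrable f (P.map fun ω => (X 1 ω, (X 2 ω, X 3 ω))) := by
        rw [triple]; exact integrable_nuC3 hf
      exact (integrable_map_measure hf.aestronglyMeasurable hT.aemeasurable).mp h1
  have hY2 : ∀ ω, Y 2 ω = max (X 1 ω) (X 2 ω) := fun ω => by
    rw [show (2:ℕ) = 1 + 1 from rfl, hYs 1 le_rfl ω, hY1]
  have hZ1 : ∀ ω, Z 1 ω = max (X 1 ω) (X 2 ω) - X 1 ω := fun ω => by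
    rw [hZ 1 le_rfl ω, hY2 ω, hY1]
  have hZ2 : ∀ ω, Z 2 ω = max (max (X 1 ω) (X 2 ω)) (X 3 ω) - max (X 1 ω) (X 2 ω) := fun ω => by
    rw [hZ 2 (by norm_num) ω, show (2:ℕ) + 1 = 2 + 1 from rfl,
      hYs 2 (by norm_num) ω, hY2 ω]
  have c1 : Continuous fun p : ℝ × ℝ × ℝ => max p.1 p.2.1 - p.1 := by fun_prop
  have c2 : Continuous fun p : ℝ × ℝ × ℝ => max (max p.1 p.2.1) p.2.2 - max p.1 p.2.1 := by
    fun_prop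
  have c12 : Continuous fun p : ℝ × ℝ × ℝ =>
      (max p.1 p.2.1 - p.1) * (max (max p.1 p.2.1) p.2.2 - max p.1 p.2.1) := by fun_prop
  have E1 : ∫ ω, Z 1 ω ∂P = 5/48 := by
    calc ∫ ω, Z 1 ω ∂P
        = ∫ ω, (fun p : ℝ × ℝ × ℝ => max p.1 p.2.1 - p.1) (X 1 ω, (X 2 ω, X 3 ω)) ∂P :=
          integral_congr_ae (Filter.Eventually.of_forall fun ω => hZ1 ω)
      _ = 5/48 := by rw [(key _ c1).1]; exact tripleZ1
  have E2 : ∫ ω, Z 2 ω ∂P = 13/768 := by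
    calc ∫ ω, Z 2 ω ∂P
        = ∫ ω, (fun p : ℝ × ℝ × ℝ => max (max p.1 p.2.1) p.2.2 - max p.1 p.2.1)
            (X 1 ω, (X 2 ω, X 3 ω)) ∂P :=
          integral_congr_ae (Filter.Eventually.of_forall fun ω => hZ2 ω)
      _ = 13/768 := by rw [(key _ c2).1]; exact tripleZ2
  have E12 : ∫ ω, Z 1 ω * Z 2 ω ∂P = 1/480 := by
    calc ∫ ω, Z 1 ω * Z 2 ω ∂P
        = ∫ ω, (fun p : ℝ × ℝ × ℝ =>
            (max p.1 p.2.1 - p.1) * (max (max p.1 p.2.1) p.2.2 - max p.1 p.2.1))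
            (X 1 ω, (X 2 ω, X 3 ω)) ∂P :=
          integral_congr_ae (Filter.Eventually.of_forall fun ω => by simp only [hZ1, hZ2])
      _ = 1/480 := by rw [(key _ c12).1]; exact tripleZ12
  have i1 : Integrable (fun ω => Z 1 ω) P :=
    ((key _ c1).2).congr (Filter.Eventually.of_forall fun ω => (hZ1 ω).symm)
  have i2 : Integrable (fun ω => Z 2 ω) P :=
    ((key _ c2).2).congr (Filter.Eventually.of_forall fun ω => (hZ2 ω).symm)
  have i12 : Integrable (fun ω => Z 1 ω * Z 2 ω) P :=
    ((key _ c12).2).congr (Filter.Eventually.of_forall fun ω => by simp only [hZ1, hZ2])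
  rw [show (∫ ω', Z 1 ω' ∂P) = 5/48 from E1, show (∫ ω', Z 2 ω' ∂P) = 13/768 from E2]
  have expand : ∀ ω, (Z 1 ω - 5/48) * (Z 2 ω - 13/768) =
      Z 1 ω * Z 2 ω - (5/48) * Z 2 ω - (13/768) * Z 1 ω + (5/48)*(13/768) := fun ω => by ring
  rw [integral_congr_ae (Filter.Eventually.of_forall expand)]
  have iA : Integrable (fun a => Z 1 a * Z 2 a - 5/48 * Z 2 a - 13/768 * Z 1 a) P :=
    (i12.sub (i2.const_mul _)).sub (i1.const_mul _)
  have s0 : ∫ a, (Z 1 a * Z 2 a - 5/48 * Z 2 a - 13/768 * Z 1 a + 5/48*(13/768)) ∂P =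
      (∫ a, (Z 1 a * Z 2 a - 5/48 * Z 2 a - 13/768 * Z 1 a) ∂P)
        + ∫ _a : Ω, ((5:ℝ)/48 * (13/768)) ∂P :=
    MeasureTheory.integral_add iA (integrable_const _)
  have s1 : ∫ a, (Z 1 a * Z 2 a - 5/48 * Z 2 a - 13/768 * Z 1 a) ∂P =
      (∫ a, (Z 1 a * Z 2 a - 5/48 * Z 2 a) ∂P) - ∫ a, (13/768 * Z 1 a) ∂P :=
    MeasureTheory.integral_sub (i12.sub (i2.const_mul _)) (i1.const_mul _)
  have s2 : ∫ a, (Z 1 a * Z 2 a - 5/48 * Z 2 a) ∂P =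
      (∫ a, (Z 1 a * Z 2 a) ∂P) - ∫ a, (5/48 * Z 2 a) ∂P :=
    MeasureTheory.integral_sub i12 (i2.const_mul _)
  have s3 : ∫ a, ((5:ℝ)/48 * Z 2 a) ∂P = 5/48 * ∫ a, Z 2 a ∂P :=
    MeasureTheory.integral_const_mul _ _
  have s4 : ∫ a, ((13:ℝ)/768 * Z 1 a) ∂P = 13/768 * ∫ a, Z 1 a ∂P :=
    MeasureTheory.integral_const_mul _ _
  rw [s0, s1, s2, s3, s4, E12, E1, E2, MeasureTheory.integral_const]
  simp [measure_univ]
  norm_num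
end

section
/- For any t with 0 ≤ t < 1 and any a > 0, there exist positive constants C_1, C_2 and an integer k_0 such that for all k ≥ k_0: C_1 < k^{1+t} (log k)^a ∫_0^1 u^k (1-u)^t / (-log(1-u))^a du < C_2. -/
open MeasureTheory Filter Topology

namespace BetaLogAux

open Set


lemma log_lb {u : ℝ} (hu1 : u < 1) : u ≤ -Real.log (1-u) := by
  have := Real.log_le_sub_one_of_pos (show (0:ℝ) < 1-u by linarith)
  linarith

lemma log_pos' {u : ℝ} (hu : 0 < u) (hu1 : u < 1) : 0 < -Real.log (1-u) :=
  lt_of_lt_of_le hu (log_lb hu1)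

lemma f_nonneg (t a : ℝ) (k : ℕ) {u : ℝ} (hu : u ∈ Ioo (0:ℝ) 1) :
    0 ≤ u ^ k * (1 - u) ^ t / (-Real.log (1 - u)) ^ a := by
  obtain ⟨h0, h1⟩ := hu
  exact div_nonneg (mul_nonneg (pow_nonneg h0.le k) (Real.rpow_nonneg (by linarith) t))
    (Real.rpow_nonneg (log_pos' h0 h1).le a)

lemma f_le {t a : ℝ} (ht0 : 0 ≤ t) (ha : 0 < a) (k : ℕ) {u : ℝ} (hu : u ∈ Ioo (0:ℝ) 1) :
    u ^ k * (1 - u) ^ t / (-Real.log (1 - u)) ^ a ≤ u ^ ((k:ℝ) - a) := by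
  obtain ⟨h0, h1⟩ := hu
  have h1u : (0:ℝ) < 1 - u := by linarith
  have hnum : u ^ k * (1 - u) ^ t ≤ u ^ k := by
    have : (1 - u) ^ t ≤ 1 := Real.rpow_le_one h1u.le (by linarith) ht0
    nlinarith [pow_nonneg h0.le k]
  have hden : u ^ a ≤ (-Real.log (1 - u)) ^ a :=
    Real.rpow_le_rpow h0.le (log_lb h1) ha.le
  have hupos : (0:ℝ) < u ^ a := Real.rpow_pos_of_pos h0 a
  calc u ^ k * (1 - u) ^ t / (-Real.log (1 - u)) ^ a
      ≤ u ^ k / u ^ a := by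
        apply div_le_div₀ (pow_nonneg h0.le k) hnum hupos hden
    _ = u ^ ((k:ℝ) - a) := by
        rw [Real.rpow_sub h0, Real.rpow_natCast]

lemma f_continuousOn (t a : ℝ) (k : ℕ) :
    ContinuousOn (fun u : ℝ => u ^ k * (1 - u) ^ t / (-Real.log (1 - u)) ^ a) (Ioo 0 1) := by
  have h1u : ∀ u ∈ Ioo (0:ℝ) 1, (1:ℝ) - u ≠ 0 := fun u hu => by
    have := hu.2; intro h; linarith [hu.2]
  apply ContinuousOn.div
  · apply ContinuousOn.mul (continuousOn_pow k)
    exact ContinuousOn.rpow_const (by fun_prop) (fun u hu => Or.inl (h1u u hu))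
  · apply ContinuousOn.rpow_const
    · exact ((continuousOn_const.sub continuousOn_id).log h1u).neg
    · exact fun u hu => Or.inl (ne_of_gt (log_pos' hu.1 hu.2))
  · exact fun u hu => ne_of_gt (Real.rpow_pos_of_pos (log_pos' hu.1 hu.2) a)

lemma rpow_integrableOn {r : ℝ} (hr : -1 < r) :
    IntegrableOn (fun u : ℝ => u ^ r) (Ioo (0:ℝ) 1) := by
  have := intervalIntegral.intervalIntegrable_rpow' (a := 0) (b := 1) hr
  rw [intervalIntegrable_iff_integrableOn_Ioo_of_le (by norm_num)] at this
  exact this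

lemma f_integrableOn {t a : ℝ} (ht0 : 0 ≤ t) (ha : 0 < a) {k : ℕ} (hk : a < k) :
    IntegrableOn (fun u : ℝ => u ^ k * (1 - u) ^ t / (-Real.log (1 - u)) ^ a) (Ioo 0 1) := by
  apply Integrable.mono' (rpow_integrableOn (show (-1:ℝ) < (k:ℝ) - a by linarith))
  · exact (f_continuousOn t a k).aestronglyMeasurable measurableSet_Ioo
  · rw [ae_restrict_iff' measurableSet_Ioo]
    filter_upwards with u hu
    rw [Real.norm_eq_abs, abs_of_nonneg (f_nonneg t a k hu)]
    exact f_le ht0 ha k hu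

lemma pow_lb {k : ℕ} (hk : 4 ≤ k) : Real.exp (-4) ≤ (1 - 2/(k:ℝ)) ^ k := by
  have hk4 : (4:ℝ) ≤ (k:ℝ) := by exact_mod_cast hk
  have hkpos : (0:ℝ) < k := by linarith
  have hx : (2:ℝ)/k ≤ 1/2 := by rw [div_le_div_iff₀ hkpos (by norm_num)]; linarith
  have hbase : (0:ℝ) < 1 - 2/(k:ℝ) := by linarith
  have hlog : -(4/(k:ℝ)) ≤ Real.log (1 - 2/(k:ℝ)) := by
    have hne : (k:ℝ) - 2 ≠ 0 := by linarith
    have h1 : Real.log ((1:ℝ) - 2/(k:ℝ))⁻¹ ≤ ((1:ℝ) - 2/(k:ℝ))⁻¹ - 1 :=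
      Real.log_le_sub_one_of_pos (by positivity)
    rw [Real.log_inv] at h1
    have h2 : ((1:ℝ) - 2/(k:ℝ))⁻¹ - 1 = (2/(k:ℝ)) / (1 - 2/(k:ℝ)) := by
      field_simp; ring
    have h3 : (2/(k:ℝ)) / (1 - 2/(k:ℝ)) ≤ 2 * (2/(k:ℝ)) := by
      rw [div_le_iff₀ hbase]
      have h2k : (0:ℝ) ≤ 2/(k:ℝ) := by positivity
      nlinarith
    have h4 : (2:ℝ) * (2/(k:ℝ)) = 4/(k:ℝ) := by ring
    rw [h2] at h1
    linarith [h1, h3, h4.le, h4.ge]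
  calc Real.exp (-4) = Real.exp ((k:ℝ) * (-(4/(k:ℝ)))) := by
        congr 1; field_simp
    _ ≤ Real.exp ((k:ℝ) * Real.log (1 - 2/(k:ℝ))) := by
        exact Real.exp_le_exp.2 (mul_le_mul_of_nonneg_left hlog hkpos.le)
    _ = (1 - 2/(k:ℝ)) ^ k := by
        rw [Real.exp_nat_mul, Real.exp_log hbase]

lemma lower {t a : ℝ} (ht0 : 0 ≤ t) (ha : 0 < a) {k : ℕ} (hk : 4 ≤ k) (hka : a < k) :
    Real.exp (-4) ≤ (k : ℝ) ^ ((1 : ℝ) + t) * Real.log k ^ a *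
      ∫ u in Set.Ioo (0 : ℝ) 1, u ^ k * (1 - u) ^ t / (-Real.log (1 - u)) ^ a := by
  have hk4 : (4:ℝ) ≤ (k:ℝ) := by exact_mod_cast hk
  have hkpos : (0:ℝ) < k := by linarith
  have hL : 0 < Real.log k := Real.log_pos (by linarith)
  have hLa : 0 < Real.log k ^ a := Real.rpow_pos_of_pos hL a
  have h2k : (2:ℝ)/k ≤ 1/2 := by rw [div_le_div_iff₀ hkpos (by norm_num)]; linarith
  have hb0 : (0:ℝ) < 1 - 2/(k:ℝ) := by linarith
  have hsub : Ioo (1 - 2/(k:ℝ)) (1 - 1/(k:ℝ)) ⊆ Ioo (0:ℝ) 1 := by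
    intro u hu
    obtain ⟨h1, h2⟩ := hu
    refine ⟨by linarith, ?_⟩
    have : (0:ℝ) < 1/k := by positivity
    linarith
  set m : ℝ := (1 - 2/(k:ℝ)) ^ k * (1/(k:ℝ)) ^ t / (Real.log k) ^ a with hm
  have hIntJ : IntegrableOn (fun u : ℝ => u ^ k * (1 - u) ^ t / (-Real.log (1 - u)) ^ a)
      (Ioo (1 - 2/(k:ℝ)) (1 - 1/(k:ℝ))) := (f_integrableOn ht0 ha hka).mono_set hsub
  have hptwise : ∀ u ∈ Ioo (1 - 2/(k:ℝ)) (1 - 1/(k:ℝ)), m ≤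
      u ^ k * (1 - u) ^ t / (-Real.log (1 - u)) ^ a := by
    intro u hu
    obtain ⟨h1, h2⟩ := hu
    have hu01 := hsub ⟨h1, h2⟩
    have h1u : 1/(k:ℝ) < 1 - u := by linarith
    have hnum : (1 - 2/(k:ℝ)) ^ k * (1/(k:ℝ)) ^ t ≤ u ^ k * (1 - u) ^ t := by
      apply mul_le_mul
      · exact pow_le_pow_left₀ hb0.le h1.le k
      · exact Real.rpow_le_rpow (by positivity) h1u.le ht0
      · exact Real.rpow_nonneg (by positivity) t
      · exact pow_nonneg hu01.1.le k
    have hden : (-Real.log (1 - u)) ^ a ≤ (Real.log k) ^ a := by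
      apply Real.rpow_le_rpow (log_pos' hu01.1 hu01.2).le _ ha.le
      have : Real.log (1/(k:ℝ)) ≤ Real.log (1 - u) :=
        Real.log_le_log (by positivity) h1u.le
      rw [Real.log_div one_ne_zero (ne_of_gt hkpos), Real.log_one] at this
      linarith
    have hdenpos : 0 < (-Real.log (1 - u)) ^ a :=
      Real.rpow_pos_of_pos (log_pos' hu01.1 hu01.2) a
    rw [hm]
    exact div_le_div₀ (mul_nonneg (pow_nonneg hu01.1.le k)
      (Real.rpow_nonneg (by linarith [hu01.2]) t)) hnum hdenpos hden
  have hconst : m * (volume (Ioo (1 - 2/(k:ℝ)) (1 - 1/(k:ℝ)))).toReal ≤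
      ∫ u in Ioo (1 - 2/(k:ℝ)) (1 - 1/(k:ℝ)), u ^ k * (1 - u) ^ t / (-Real.log (1 - u)) ^ a :=
    setIntegral_ge_of_const_le_real measurableSet_Ioo
      (by rw [Real.volume_Ioo]; exact ENNReal.ofReal_ne_top) hptwise hIntJ
  have hvol : (volume (Ioo (1 - 2/(k:ℝ)) (1 - 1/(k:ℝ)))).toReal = 1/(k:ℝ) := by
    rw [Real.volume_Ioo]
    have : (1 - 1/(k:ℝ)) - (1 - 2/(k:ℝ)) = 1/(k:ℝ) := by ring
    rw [this, ENNReal.toReal_ofReal (by positivity)]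
  have hmono : ∫ u in Ioo (1 - 2/(k:ℝ)) (1 - 1/(k:ℝ)), u ^ k * (1 - u) ^ t / (-Real.log (1 - u)) ^ a ≤
      ∫ u in Ioo (0:ℝ) 1, u ^ k * (1 - u) ^ t / (-Real.log (1 - u)) ^ a := by
    apply setIntegral_mono_set (f_integrableOn ht0 ha hka)
    · filter_upwards [ae_restrict_mem measurableSet_Ioo] with u hu using f_nonneg t a k hu
    · exact HasSubset.Subset.eventuallyLE hsub
  have key : m * (1/(k:ℝ)) ≤ ∫ u in Ioo (0:ℝ) 1, u ^ k * (1 - u) ^ t / (-Real.log (1 - u)) ^ a := by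
    rw [← hvol]; exact hconst.trans hmono
  have hPm : (k : ℝ) ^ ((1 : ℝ) + t) * Real.log k ^ a * (m * (1/(k:ℝ))) = (1 - 2/(k:ℝ)) ^ k := by
    rw [hm, Real.rpow_add hkpos, Real.rpow_one, one_div, Real.inv_rpow hkpos.le]
    field_simp
  calc Real.exp (-4) ≤ (1 - 2/(k:ℝ)) ^ k := pow_lb hk
    _ = (k : ℝ) ^ ((1 : ℝ) + t) * Real.log k ^ a * (m * (1/(k:ℝ))) := hPm.symm
    _ ≤ _ := mul_le_mul_of_nonneg_left key (by positivity)

lemma upper {t a : ℝ} (ht0 : 0 ≤ t) (ha : 0 < a) {k : ℕ} (hk : 4 ≤ k) (hka : a + 1 ≤ (k:ℝ)) :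
    ∫ u in Set.Ioo (0 : ℝ) 1, u ^ k * (1 - u) ^ t / (-Real.log (1 - u)) ^ a ≤
      (2:ℝ) ^ a * Real.exp (-(k:ℝ) ^ ((1:ℝ)/2)) +
      (2:ℝ) ^ a * Real.Gamma (t+1) * ((1/(k:ℝ)) ^ (t+1) * (Real.log k) ^ (-a)) := by
  have hk4 : (4:ℝ) ≤ (k:ℝ) := by exact_mod_cast hk
  have hkpos : (0:ℝ) < k := by linarith
  have hL : 0 < Real.log k := Real.log_pos (by linarith)
  set δ : ℝ := (k:ℝ) ^ (-(1:ℝ)/2) with hδ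
  have hδpos : 0 < δ := Real.rpow_pos_of_pos hkpos _
  have hδhalf : δ ≤ 1/2 := by
    have h1 : (k:ℝ) ^ ((1:ℝ)/2) ≥ (4:ℝ) ^ ((1:ℝ)/2) := Real.rpow_le_rpow (by norm_num) hk4 (by norm_num)
    have h4 : (4:ℝ) ^ ((1:ℝ)/2) = 2 := by
      rw [show (4:ℝ) = 2^(2:ℕ) by norm_num, ← Real.rpow_natCast 2 2, ← Real.rpow_mul (by norm_num)]
      norm_num
    have h2 : δ = ((k:ℝ) ^ ((1:ℝ)/2))⁻¹ := by
      rw [hδ, ← Real.rpow_neg hkpos.le]; ring_nf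
    rw [h2]
    rw [h4] at h1
    have : (0:ℝ) < (k:ℝ) ^ ((1:ℝ)/2) := Real.rpow_pos_of_pos hkpos _
    rw [inv_le_comm₀ (by positivity) (by norm_num)]
    simpa using h1
  have hδ1 : δ < 1 := by linarith
  have hb0 : (0:ℝ) < 1 - δ := by linarith
  have hb1 : 1 - δ < 1 := by linarith
  have hka' : a < (k:ℝ) := by linarith
  have hIoc : Ioc (0:ℝ) (1 - δ) ⊆ Ioo (0:ℝ) 1 := fun u hu => ⟨hu.1, lt_of_le_of_lt hu.2 hb1⟩
  have hIoo2 : Ioo (1 - δ) (1:ℝ) ⊆ Ioo (0:ℝ) 1 := fun u hu => ⟨lt_trans hb0 hu.1, hu.2⟩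
  have hfint := f_integrableOn ht0 ha hka'
  -- splitting
  have hsplit : ∫ u in Set.Ioo (0 : ℝ) 1, u ^ k * (1 - u) ^ t / (-Real.log (1 - u)) ^ a =
      (∫ u in Set.Ioc (0:ℝ) (1-δ), u ^ k * (1 - u) ^ t / (-Real.log (1 - u)) ^ a) +
      ∫ u in Set.Ioo (1-δ) (1:ℝ), u ^ k * (1 - u) ^ t / (-Real.log (1 - u)) ^ a := by
    rw [← Set.Ioc_union_Ioo_eq_Ioo (le_of_lt hb0) hb1]
    apply setIntegral_union
    · exact Set.disjoint_left.2 fun x hx1 hx2 => absurd hx1.2 (not_le.2 hx2.1)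
    · exact measurableSet_Ioo
    · exact hfint.mono_set hIoc
    · exact hfint.mono_set hIoo2
  -- piece A
  have hA : (∫ u in Set.Ioc (0:ℝ) (1-δ), u ^ k * (1 - u) ^ t / (-Real.log (1 - u)) ^ a) ≤
      (2:ℝ) ^ a * Real.exp (-(k:ℝ) ^ ((1:ℝ)/2)) := by
    have hrint : IntegrableOn (fun u : ℝ => u ^ ((k:ℝ) - a)) (Ioc 0 (1-δ)) := by
      rw [← intervalIntegrable_iff_integrableOn_Ioc_of_le hb0.le]
      exact intervalIntegral.intervalIntegrable_rpow' (by linarith)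
    have h1 : (∫ u in Set.Ioc (0:ℝ) (1-δ), u ^ k * (1 - u) ^ t / (-Real.log (1 - u)) ^ a) ≤
        ∫ u in Set.Ioc (0:ℝ) (1-δ), u ^ ((k:ℝ) - a) := by
      apply setIntegral_mono_on (hfint.mono_set hIoc) hrint measurableSet_Ioc
      exact fun u hu => f_le ht0 ha k (hIoc hu)
    have h2 : (∫ u in Set.Ioc (0:ℝ) (1-δ), u ^ ((k:ℝ) - a)) =
        (1-δ) ^ ((k:ℝ) - a + 1) / ((k:ℝ) - a + 1) := by
      rw [← intervalIntegral.integral_of_le hb0.le,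
        integral_rpow (Or.inl (by linarith)), Real.zero_rpow (ne_of_gt (by linarith)), sub_zero]
    have h3 : (1-δ) ^ ((k:ℝ) - a + 1) / ((k:ℝ) - a + 1) ≤ (1-δ) ^ ((k:ℝ) - a + 1) := by
      apply div_le_self (Real.rpow_nonneg hb0.le _) (by linarith)
    have h4 : (1-δ) ^ ((k:ℝ) - a + 1) ≤ (1-δ) ^ ((k:ℝ) - a) :=
      Real.rpow_le_rpow_of_exponent_ge hb0 hb1.le (by linarith)
    have h5 : (1-δ) ^ ((k:ℝ) - a) = (1-δ) ^ (k:ℝ) / (1-δ) ^ a := Real.rpow_sub hb0 _ _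
    have h6 : (1-δ) ^ (k:ℝ) ≤ Real.exp (-(k:ℝ) ^ ((1:ℝ)/2)) := by
      rw [Real.rpow_def_of_pos hb0]
      apply Real.exp_le_exp.2
      have hlog : Real.log (1-δ) ≤ -δ := by
        have := Real.log_le_sub_one_of_pos hb0
        linarith
      calc Real.log (1-δ) * (k:ℝ) ≤ -δ * (k:ℝ) := by
            apply mul_le_mul_of_nonneg_right hlog hkpos.le
        _ = -(k:ℝ) ^ ((1:ℝ)/2) := by
            have hδk : δ * (k:ℝ) = (k:ℝ) ^ ((1:ℝ)/2) := by
              rw [hδ]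
              nth_rewrite 2 [← Real.rpow_one (k:ℝ)]
              rw [← Real.rpow_add hkpos]
              norm_num
            rw [neg_mul, hδk]
    have h7 : ((1:ℝ)/2) ^ a ≤ (1-δ) ^ a := Real.rpow_le_rpow (by norm_num) (by linarith) ha.le
    have h8 : (1-δ) ^ (k:ℝ) / (1-δ) ^ a ≤ Real.exp (-(k:ℝ) ^ ((1:ℝ)/2)) / ((1:ℝ)/2) ^ a := by
      apply div_le_div₀ (Real.exp_nonneg _) h6 (Real.rpow_pos_of_pos (by norm_num) a) h7
    have h9 : Real.exp (-(k:ℝ) ^ ((1:ℝ)/2)) / ((1:ℝ)/2) ^ a =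
        (2:ℝ) ^ a * Real.exp (-(k:ℝ) ^ ((1:ℝ)/2)) := by
      rw [one_div, Real.inv_rpow (by norm_num : (0:ℝ) ≤ 2), div_eq_mul_inv, inv_inv, mul_comm]
    linarith [h1, h2.le, h2.ge, h3, h4, h5.le, h5.ge, h8, h9.le, h9.ge]
  -- piece B
  have hLa : (0:ℝ) < Real.log k ^ (-a) := Real.rpow_pos_of_pos hL _
  set C : ℝ := (2:ℝ) ^ a * (Real.log k) ^ (-a) with hC
  have hCpos : 0 < C := mul_pos (Real.rpow_pos_of_pos (by norm_num) a) hLa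
  set g : ℝ → ℝ := fun u => C * ((1 - u) ^ t * Real.exp (-((k:ℝ) * (1 - u)))) with hg
  have hgnonneg : ∀ u ∈ Ioo (0:ℝ) 1, 0 ≤ g u := by
    intro u hu
    exact mul_nonneg hCpos.le (mul_nonneg (Real.rpow_nonneg (by linarith [hu.2]) t)
      (Real.exp_nonneg _))
  have hgcont : ContinuousOn g (Ioo (0:ℝ) 1) := by
    apply ContinuousOn.mul continuousOn_const
    apply ContinuousOn.mul
    · exact ContinuousOn.rpow_const (by fun_prop) (fun u hu => Or.inl (by intro h; linarith [hu.2]))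
    · fun_prop
  have hgint : IntegrableOn g (Ioo (0:ℝ) 1) := by
    apply Integrable.mono' (g := fun _ : ℝ => C)
    · exact integrableOn_const (by rw [Real.volume_Ioo]; exact ENNReal.ofReal_ne_top)
    · exact hgcont.aestronglyMeasurable measurableSet_Ioo
    · rw [ae_restrict_iff' measurableSet_Ioo]
      filter_upwards with u hu
      rw [Real.norm_eq_abs, abs_of_nonneg (hgnonneg u hu)]
      rw [hg]
      have h1 : (1 - u) ^ t ≤ 1 := Real.rpow_le_one (by linarith [hu.2]) (by linarith [hu.1]) ht0
      have h2 : Real.exp (-((k:ℝ) * (1 - u))) ≤ 1 := by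
        rw [Real.exp_le_one_iff]
        have : 0 ≤ (k:ℝ) * (1 - u) := mul_nonneg hkpos.le (by linarith [hu.2])
        linarith
      calc C * ((1 - u) ^ t * Real.exp (-((k:ℝ) * (1 - u)))) ≤ C * (1 * 1) := by
            apply mul_le_mul_of_nonneg_left _ hCpos.le
            exact mul_le_mul h1 h2 (Real.exp_nonneg _) zero_le_one
        _ = C := by ring
  have hfg : ∀ u ∈ Ioo (1-δ) (1:ℝ), u ^ k * (1 - u) ^ t / (-Real.log (1 - u)) ^ a ≤ g u := by
    intro u hu
    have hu01 := hIoo2 hu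
    have h1u : 0 < 1 - u := by linarith [hu01.2]
    have h1uδ : 1 - u < δ := by linarith [hu.1]
    have hlg : (1/2) * Real.log k ≤ -Real.log (1 - u) := by
      have h1 : Real.log (1 - u) < Real.log δ := Real.log_lt_log h1u h1uδ
      have h2 : Real.log δ = (-1/2) * Real.log k := by rw [hδ, Real.log_rpow hkpos]
      rw [h2] at h1
      linarith
    have hLhalf : (0:ℝ) < (1/2) * Real.log k := by positivity
    have hden : ((1/2) * Real.log k) ^ a ≤ (-Real.log (1 - u)) ^ a :=
      Real.rpow_le_rpow hLhalf.le hlg ha.le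
    have hnum : u ^ k * (1 - u) ^ t ≤ (1 - u) ^ t * Real.exp (-((k:ℝ) * (1 - u))) := by
      rw [mul_comm]
      apply mul_le_mul_of_nonneg_left _ (Real.rpow_nonneg h1u.le t)
      have hue : u ≤ Real.exp (u - 1) := by
        have := Real.add_one_le_exp (u - 1)
        linarith
      calc u ^ k ≤ (Real.exp (u - 1)) ^ k := pow_le_pow_left₀ hu01.1.le hue k
        _ = Real.exp ((k:ℝ) * (u - 1)) := (Real.exp_nat_mul _ k).symm
        _ = Real.exp (-((k:ℝ) * (1 - u))) := by ring_nf
    have hnum0 : 0 ≤ u ^ k * (1 - u) ^ t :=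
      mul_nonneg (pow_nonneg hu01.1.le k) (Real.rpow_nonneg h1u.le t)
    have step : u ^ k * (1 - u) ^ t / (-Real.log (1 - u)) ^ a ≤
        ((1 - u) ^ t * Real.exp (-((k:ℝ) * (1 - u)))) / ((1/2) * Real.log k) ^ a :=
      div_le_div₀ (by linarith [hnum, hnum0]) hnum (Real.rpow_pos_of_pos hLhalf a) hden
    refine step.trans (le_of_eq ?_)
    rw [hg, hC]
    rw [Real.mul_rpow (by norm_num) hL.le, Real.rpow_neg hL.le,
      one_div, Real.inv_rpow (by norm_num : (0:ℝ) ≤ 2)]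
    field_simp
  have hB1 : (∫ u in Set.Ioo (1-δ) (1:ℝ), u ^ k * (1 - u) ^ t / (-Real.log (1 - u)) ^ a) ≤
      ∫ u in Set.Ioo (1-δ) (1:ℝ), g u :=
    setIntegral_mono_on (hfint.mono_set hIoo2) (hgint.mono_set hIoo2) measurableSet_Ioo hfg
  have hB2 : (∫ u in Set.Ioo (1-δ) (1:ℝ), g u) ≤ ∫ u in Set.Ioo (0:ℝ) 1, g u := by
    apply setIntegral_mono_set hgint
    · filter_upwards [ae_restrict_mem measurableSet_Ioo] with u hu using hgnonneg u hu
    · exact HasSubset.Subset.eventuallyLE hIoo2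
  have hsub2 : (∫ u in Set.Ioo (0:ℝ) 1, (1 - u) ^ t * Real.exp (-((k:ℝ) * (1 - u)))) =
      ∫ s in Set.Ioo (0:ℝ) 1, s ^ t * Real.exp (-((k:ℝ) * s)) := by
    rw [← integral_Ioc_eq_integral_Ioo, ← intervalIntegral.integral_of_le zero_le_one,
      ← integral_Ioc_eq_integral_Ioo, ← intervalIntegral.integral_of_le zero_le_one]
    have := intervalIntegral.integral_comp_sub_left
      (f := fun s : ℝ => s ^ t * Real.exp (-((k:ℝ) * s))) (a := 0) (b := 1) 1
    norm_num at this
    rw [← this]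
  have hIoiInt : IntegrableOn (fun s : ℝ => s ^ t * Real.exp (-((k:ℝ) * s))) (Ioi (0:ℝ)) := by
    have := integrableOn_rpow_mul_exp_neg_mul_rpow (show (-1:ℝ) < t by linarith) (by norm_num : (0:ℝ) < 1) hkpos
    apply this.congr_fun _ measurableSet_Ioi
    intro s _
    simp only [Real.rpow_one, neg_mul]
  have hgam : (∫ s in Set.Ioo (0:ℝ) 1, s ^ t * Real.exp (-((k:ℝ) * s))) ≤
      (1/(k:ℝ)) ^ (t+1) * Real.Gamma (t+1) := by
    have hmono2 : (∫ s in Set.Ioo (0:ℝ) 1, s ^ t * Real.exp (-((k:ℝ) * s))) ≤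
        ∫ s in Set.Ioi (0:ℝ), s ^ t * Real.exp (-((k:ℝ) * s)) := by
      apply setIntegral_mono_set hIoiInt
      · filter_upwards [ae_restrict_mem measurableSet_Ioi] with s hs using
          mul_nonneg (Real.rpow_nonneg (le_of_lt hs) t) (Real.exp_nonneg _)
      · exact HasSubset.Subset.eventuallyLE Ioo_subset_Ioi_self
    have hval := Real.integral_rpow_mul_exp_neg_mul_Ioi (show (0:ℝ) < t + 1 by linarith) hkpos
    simp only [add_sub_cancel_right] at hval
    rw [hval] at hmono2
    exact hmono2
  have hB : (∫ u in Set.Ioo (1-δ) (1:ℝ), u ^ k * (1 - u) ^ t / (-Real.log (1 - u)) ^ a) ≤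
      (2:ℝ) ^ a * Real.Gamma (t+1) * ((1/(k:ℝ)) ^ (t+1) * (Real.log k) ^ (-a)) := by
    have hgval : (∫ u in Set.Ioo (0:ℝ) 1, g u) =
        C * ∫ u in Set.Ioo (0:ℝ) 1, (1 - u) ^ t * Real.exp (-((k:ℝ) * (1 - u))) := by
      rw [hg]; exact integral_const_mul C _
    have : (∫ u in Set.Ioo (0:ℝ) 1, g u) ≤ C * ((1/(k:ℝ)) ^ (t+1) * Real.Gamma (t+1)) := by
      rw [hgval, hsub2]
      exact mul_le_mul_of_nonneg_left hgam hCpos.le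
    calc (∫ u in Set.Ioo (1-δ) (1:ℝ), u ^ k * (1 - u) ^ t / (-Real.log (1 - u)) ^ a)
        ≤ ∫ u in Set.Ioo (0:ℝ) 1, g u := hB1.trans hB2
      _ ≤ C * ((1/(k:ℝ)) ^ (t+1) * Real.Gamma (t+1)) := this
      _ = (2:ℝ) ^ a * Real.Gamma (t+1) * ((1/(k:ℝ)) ^ (t+1) * (Real.log k) ^ (-a)) := by
          rw [hC]; ring
  rw [hsplit]
  exact add_le_add hA hB

lemma tendsto_E (t a : ℝ) (ht0 : 0 ≤ t) (ha : 0 < a) :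
    Tendsto (fun x : ℝ => x ^ ((1:ℝ)+t) * Real.log x ^ a *
      ((2:ℝ)^a * Real.exp (-x ^ ((1:ℝ)/2)))) atTop (𝓝 0) := by
  have h0 : Tendsto (fun y : ℝ => y ^ (2*((1:ℝ)+t+a)) * Real.exp (-1 * y)) atTop (𝓝 0) :=
    tendsto_rpow_mul_exp_neg_mul_atTop_nhds_zero _ 1 one_pos
  have h1 : Tendsto (fun x : ℝ => x ^ ((1:ℝ)/2)) atTop atTop :=
    tendsto_rpow_atTop (by norm_num)
  have h2 := (h0.comp h1).const_mul ((2:ℝ)^a)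
  rw [mul_zero] at h2
  have h3 : Tendsto (fun x : ℝ => (2:ℝ)^a * (x ^ ((1:ℝ)+t+a) * Real.exp (-(x ^ ((1:ℝ)/2)))))
      atTop (𝓝 0) := by
    apply h2.congr'
    filter_upwards [eventually_ge_atTop (0:ℝ)] with x hx
    simp only [Function.comp]
    rw [← Real.rpow_mul hx, neg_one_mul, show (1:ℝ)/2 * (2*(1+t+a)) = 1+t+a by ring]
  apply tendsto_of_tendsto_of_tendsto_of_le_of_le' tendsto_const_nhds h3
  · filter_upwards [eventually_ge_atTop (1:ℝ)] with x hx
    have hx0 : (0:ℝ) < x := by linarith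
    have hlog : 0 ≤ Real.log x := Real.log_nonneg hx
    positivity
  · filter_upwards [eventually_ge_atTop (1:ℝ)] with x hx
    have hx0 : (0:ℝ) < x := by linarith
    have hlog0 : 0 ≤ Real.log x := Real.log_nonneg hx
    have hlog : Real.log x ≤ x := (Real.log_le_sub_one_of_pos hx0).trans (by linarith)
    have h4 : Real.log x ^ a ≤ x ^ a := Real.rpow_le_rpow hlog0 hlog ha.le
    have h5 : x ^ ((1:ℝ)+t) * x ^ a = x ^ ((1:ℝ)+t+a) := (Real.rpow_add hx0 _ _).symm
    calc x ^ ((1:ℝ)+t) * Real.log x ^ a * ((2:ℝ)^a * Real.exp (-x ^ ((1:ℝ)/2)))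
        ≤ x ^ ((1:ℝ)+t) * x ^ a * ((2:ℝ)^a * Real.exp (-x ^ ((1:ℝ)/2))) := by
          apply mul_le_mul_of_nonneg_right _ (by positivity)
          exact mul_le_mul_of_nonneg_left h4 (Real.rpow_nonneg hx0.le _)
      _ = (2:ℝ)^a * (x ^ ((1:ℝ)+t+a) * Real.exp (-(x ^ ((1:ℝ)/2)))) := by rw [h5]; ring

end BetaLogAux

open BetaLogAux in
/-- For `0 ≤ t < 1` and `a > 0`, there exist positive constants `C₁, C₂` and `k₀` with
`C₁ < k^{1+t} (log k)^a ∫_0^1 u^k (1-u)^t / (-log(1-u))^a du < C₂` for all `k ≥ k₀`. -/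
theorem beta_log_integral_bounds (t a : ℝ) (ht0 : 0 ≤ t) (ht1 : t < 1) (ha : 0 < a) :
    ∃ C₁ C₂ : ℝ, 0 < C₁ ∧ 0 < C₂ ∧ ∃ k₀ : ℕ, ∀ k : ℕ, k₀ ≤ k →
      C₁ < (k : ℝ) ^ ((1 : ℝ) + t) * Real.log k ^ a *
          ∫ u in Set.Ioo (0 : ℝ) 1, u ^ k * (1 - u) ^ t / (-Real.log (1 - u)) ^ a ∧
      (k : ℝ) ^ ((1 : ℝ) + t) * Real.log k ^ a *
          ∫ u in Set.Ioo (0 : ℝ) 1, u ^ k * (1 - u) ^ t / (-Real.log (1 - u)) ^ a < C₂ := by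
  refine ⟨Real.exp (-4) / 2, (2:ℝ) ^ a * Real.Gamma (t+1) + 2, by positivity, by positivity, ?_⟩
  have hE : ∀ᶠ k : ℕ in atTop, (k:ℝ) ^ ((1:ℝ)+t) * Real.log k ^ a *
      ((2:ℝ)^a * Real.exp (-(k:ℝ) ^ ((1:ℝ)/2))) < 1 := by
    have h := (tendsto_E t a ht0 ha).comp tendsto_natCast_atTop_atTop
    exact h.eventually_lt_const one_pos
  have h4 : ∀ᶠ k : ℕ in atTop, 4 ≤ k := eventually_ge_atTop 4
  have hka : ∀ᶠ k : ℕ in atTop, a + 1 ≤ (k:ℝ) :=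
    tendsto_natCast_atTop_atTop.eventually_ge_atTop (a+1)
  obtain ⟨k₀, hk₀⟩ := eventually_atTop.1 (hE.and (h4.and hka))
  refine ⟨k₀, fun k hk => ?_⟩
  obtain ⟨hEk, hk4, hkak⟩ := hk₀ k hk
  have hka' : a < (k:ℝ) := by linarith
  have hk4' : (4:ℝ) ≤ (k:ℝ) := by exact_mod_cast hk4
  have hkpos : (0:ℝ) < k := by linarith
  have hL : 0 < Real.log k := Real.log_pos (by linarith)
  have hPpos : 0 < (k:ℝ) ^ ((1:ℝ)+t) * Real.log k ^ a :=
    mul_pos (Real.rpow_pos_of_pos hkpos _) (Real.rpow_pos_of_pos hL _)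
  constructor
  · have h := lower ht0 ha hk4 hka'
    have hexp : 0 < Real.exp (-4) := Real.exp_pos _
    linarith
  · have hU := upper ht0 ha hk4 hkak
    have hPI := mul_le_mul_of_nonneg_left hU hPpos.le
    have hne1 : ((k:ℝ) ^ (t+1)) ≠ 0 := ne_of_gt (Real.rpow_pos_of_pos hkpos _)
    have hne2 : (Real.log k ^ a) ≠ 0 := ne_of_gt (Real.rpow_pos_of_pos hL _)
    have hsimp : (k:ℝ) ^ ((1:ℝ)+t) * Real.log k ^ a *
        ((2:ℝ)^a * Real.Gamma (t+1) * ((1/(k:ℝ)) ^ (t+1) * (Real.log k) ^ (-a))) =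
        (2:ℝ)^a * Real.Gamma (t+1) := by
      rw [one_div, Real.inv_rpow hkpos.le, Real.rpow_neg hL.le,
        show (1:ℝ)+t = t+1 by ring]
      field_simp
    have hgam : 0 ≤ (2:ℝ)^a * Real.Gamma (t+1) := by positivity
    calc (k : ℝ) ^ ((1 : ℝ) + t) * Real.log k ^ a *
          ∫ u in Set.Ioo (0 : ℝ) 1, u ^ k * (1 - u) ^ t / (-Real.log (1 - u)) ^ a
        ≤ (k:ℝ) ^ ((1:ℝ)+t) * Real.log k ^ a *
          ((2:ℝ) ^ a * Real.exp (-(k:ℝ) ^ ((1:ℝ)/2)) +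
           (2:ℝ) ^ a * Real.Gamma (t+1) * ((1/(k:ℝ)) ^ (t+1) * (Real.log k) ^ (-a))) := hPI
      _ = (k:ℝ) ^ ((1:ℝ)+t) * Real.log k ^ a * ((2:ℝ) ^ a * Real.exp (-(k:ℝ) ^ ((1:ℝ)/2))) +
          (k:ℝ) ^ ((1:ℝ)+t) * Real.log k ^ a *
          ((2:ℝ) ^ a * Real.Gamma (t+1) * ((1/(k:ℝ)) ^ (t+1) * (Real.log k) ^ (-a))) := by ring
      _ < 1 + (2:ℝ)^a * Real.Gamma (t+1) := by rw [hsimp]; linarith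
      _ < (2:ℝ) ^ a * Real.Gamma (t+1) + 2 := by linarith
end

section
/- Let F be in the NCP class (all partial maxima spacings pairwise non-positively correlated, for every sample size). Then the variance of the partial maxima BLUE L_2 of the scale parameter θ_2 satisfies Var[L_2] ≤ θ_2² / Σ_{k=1}^{n-1} (m_k²/s_k²), where m_k = E[Z_k] and s_k² = Var[Z_k] are the mean and variance of the k-th partial maxima spacing from the standard distribution F. -/
open MeasureTheory ProbabilityTheory Set


lemma my_telescope_sum (N : ℕ) (A g : ℕ → ℝ) (hA0 : A 0 = 0) (hAn : A (N + 1) = 0) :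
    ∑ i ∈ Finset.Icc 1 (N + 1), (A (i - 1) - A i) * g i
      = ∑ k ∈ Finset.Icc 1 N, A k * (g (k + 1) - g k) := by
  rw [← Finset.Ico_add_one_right_eq_Icc 1 (N + 1), ← Finset.Ico_add_one_right_eq_Icc 1 N,
    Finset.sum_Ico_eq_sum_range, Finset.sum_Ico_eq_sum_range]
  simp only [Nat.add_sub_cancel]
  have hL : ∀ j : ℕ, (A (1 + j - 1) - A (1 + j)) * g (1 + j)
      = A j * g (j + 1) - A (j + 1) * g (j + 1) := by
    intro j
    have h1 : 1 + j - 1 = j := by omega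
    have h2 : 1 + j = j + 1 := by omega
    rw [h1, h2, sub_mul]
  have hR : ∀ j : ℕ, A (1 + j) * (g (1 + j + 1) - g (1 + j))
      = A (j + 1) * (g (j + 2) - g (j + 1)) := by
    intro j
    have h2 : 1 + j = j + 1 := by omega
    rw [h2]
  rw [Finset.sum_congr rfl (fun j _ => hL j), Finset.sum_congr rfl (fun j _ => hR j),
    Finset.sum_sub_distrib, Finset.sum_range_succ' (fun j => A j * g (j + 1)) N,
    Finset.sum_range_succ, hA0, hAn]
  simp only [zero_mul, add_zero]
  rw [← Finset.sum_sub_distrib]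
  apply Finset.sum_congr rfl
  intro j _
  ring

lemma my_L2_mul_integrable {Ω : Type*} [MeasurableSpace Ω] {P : Measure Ω}
    {f g : Ω → ℝ} (hf : MemLp f 2 P) (hg : MemLp g 2 P) :
    Integrable (fun ω => f ω * g ω) P := by
  refine (hf.integrable_sq.add hg.integrable_sq).mono' (hf.1.mul hg.1) ?_
  refine Filter.Eventually.of_forall fun ω => ?_
  simp only [Real.norm_eq_abs, abs_mul, Pi.add_apply]
  nlinarith [sq_nonneg (|f ω| - |g ω|), sq_abs (f ω), sq_abs (g ω),
    abs_nonneg (f ω), abs_nonneg (g ω)]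

lemma my_variance_congr {Ω : Type*} [MeasurableSpace Ω] {P : Measure Ω} {f g : Ω → ℝ}
    (h : f =ᵐ[P] g) : variance f P = variance g P := by
  unfold ProbabilityTheory.variance ProbabilityTheory.evariance
  rw [integral_congr_ae h]
  congr 1
  apply lintegral_congr_ae
  filter_upwards [h] with ω hω
  rw [hω]

lemma my_variance_const {Ω : Type*} [MeasurableSpace Ω] (P : Measure Ω) [IsProbabilityMeasure P]
    (r : ℝ) : variance (fun _ => r) P = 0 := by
  unfold ProbabilityTheory.variance ProbabilityTheory.evariance
  simp

lemma my_variance_eq_integral {Ω : Type*} [MeasurableSpace Ω] {P : Measure Ω}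
    [IsProbabilityMeasure P] {f : Ω → ℝ} (hf : MemLp f 2 P) :
    variance f P = ∫ ω, (f ω - ∫ ω', f ω' ∂P) ^ 2 ∂P := by
  rw [variance_eq_integral hf.1.aemeasurable]

/-- If `F` is in the NCP class, then the variance of the partial maxima BLUE `L₂` of the
scale parameter satisfies `Var[L₂] ≤ θ₂² / Σ_{k=1}^{n-1} m_k²/s_k²`. -/
theorem variance_bound_partial_maxima_BLUE_scale
    {Ω : Type*} [MeasurableSpace Ω] (P : Measure Ω) [IsProbabilityMeasure P]
    (X : ℕ → Ω → ℝ) (hmeas : ∀ k, Measurable (X k))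
    (hindep : iIndepFun X P)
    (hid : ∀ k, P.map (X k) = P.map (X 1))
    (hL2 : MemLp (X 1) 2 P)
    (Y : ℕ → Ω → ℝ) (hY1 : Y 1 = X 1)
    (hYs : ∀ k, 1 ≤ k → ∀ ω, Y (k + 1) ω = max (Y k ω) (X (k + 1) ω))
    (Z : ℕ → Ω → ℝ) (hZ : ∀ k, 1 ≤ k → ∀ ω, Z k ω = Y (k + 1) ω - Y k ω)
    -- NCP: partial maxima spacings are pairwise non-positively correlated
    (hNCP : ∀ i j : ℕ, 1 ≤ i → 1 ≤ j → i ≠ j →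
      (∫ ω, (Z i ω - ∫ ω', Z i ω' ∂P) * (Z j ω - ∫ ω', Z j ω' ∂P) ∂P) ≤ 0)
    (n : ℕ) (hn : 2 ≤ n) (θ₂ : ℝ) (hθ₂ : 0 < θ₂)
    (c : ℕ → ℝ)
    -- `c` gives an unbiased linear estimator of the scale parameter, for all parameter values
    (hunb : ∀ θ₁' θ₂' : ℝ, 0 < θ₂' →
      (∫ ω, ∑ i ∈ Finset.Icc 1 n, c i * (θ₁' + θ₂' * Y i ω) ∂P) = θ₂')
    -- `c` has minimal variance among all linear unbiased estimators (i.e. it is the BLUE)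
    (hblue : ∀ d : ℕ → ℝ,
      (∀ θ₁' θ₂' : ℝ, 0 < θ₂' →
        (∫ ω, ∑ i ∈ Finset.Icc 1 n, d i * (θ₁' + θ₂' * Y i ω) ∂P) = θ₂') →
      variance (fun ω => ∑ i ∈ Finset.Icc 1 n, c i * Y i ω) P ≤
        variance (fun ω => ∑ i ∈ Finset.Icc 1 n, d i * Y i ω) P) :
    θ₂ ^ 2 * variance (fun ω => ∑ i ∈ Finset.Icc 1 n, c i * Y i ω) P ≤
      θ₂ ^ 2 / ∑ k ∈ Finset.Icc 1 (n - 1),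
        (∫ ω, Z k ω ∂P) ^ 2 / variance (Z k) P := by

  clear hindep
  obtain ⟨N, rfl⟩ : ∃ N : ℕ, n = N + 1 := ⟨n - 1, by omega⟩
  simp only [Nat.add_sub_cancel]
  have hN1 : 1 ≤ N := by omega
  set m : ℕ → ℝ := fun k => ∫ ω, Z k ω ∂P with hm_def
  set v : ℕ → ℝ := fun k => variance (Z k) P with hv_def
  have hm_app : ∀ k, (∫ ω, Z k ω ∂P) = m k := fun k => rfl
  have hv_app : ∀ k, variance (Z k) P = v k := fun k => rfl
  simp only [hm_app, hv_app] at hNCP ⊢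
  -- L² facts
  have hXL2 : ∀ k, 1 ≤ k → MemLp (X k) 2 P := by
    intro k hk
    have h1 : MemLp id 2 (P.map (X 1)) :=
      (memLp_map_measure_iff aestronglyMeasurable_id (hmeas 1).aemeasurable).2 hL2
    rw [← hid k] at h1
    exact (memLp_map_measure_iff aestronglyMeasurable_id (hmeas k).aemeasurable).1 h1
  have hYL2 : ∀ k, 1 ≤ k → MemLp (Y k) 2 P := by
    intro k hk
    induction k with
    | zero => omega
    | succ j ih =>
      by_cases hj0 : j = 0
      · subst hj0
        simpa [hY1] using hL2
      · have hj : 1 ≤ j := by omega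
        have hfun : Y (j + 1) = Y j ⊔ X (j + 1) := by
          funext ω
          rw [hYs j hj ω]
          rfl
        rw [hfun]
        exact (ih hj).sup (hXL2 (j + 1) (by omega))
  have hZL2 : ∀ k, 1 ≤ k → MemLp (Z k) 2 P := by
    intro k hk
    have hfun : Z k = fun ω => Y (k + 1) ω - Y k ω := funext (hZ k hk)
    rw [hfun]
    exact (hYL2 (k + 1) (by omega)).sub (hYL2 k hk)
  have hYint : ∀ k, 1 ≤ k → Integrable (Y k) P := fun k hk => (hYL2 k hk).integrable one_le_two
  have hZint : ∀ k, 1 ≤ k → Integrable (Z k) P := fun k hk => (hZL2 k hk).integrable one_le_two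
  have hZnn : ∀ k, 1 ≤ k → ∀ ω, 0 ≤ Z k ω := by
    intro k hk ω
    rw [hZ k hk ω, hYs k hk ω]
    exact sub_nonneg.2 (le_max_left _ _)
  have hm_nn : ∀ k, 1 ≤ k → 0 ≤ m k := fun k hk => integral_nonneg (hZnn k hk)
  have hv_nn : ∀ k, 0 ≤ v k := fun k => variance_nonneg _ _
  -- evaluation of the expectation of a linear estimator
  have hEval : ∀ (e : ℕ → ℝ) (θ₁' θ₂' : ℝ),
      (∫ ω, ∑ i ∈ Finset.Icc 1 (N + 1), e i * (θ₁' + θ₂' * Y i ω) ∂P)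
        = θ₁' * (∑ i ∈ Finset.Icc 1 (N + 1), e i)
          + θ₂' * ∑ i ∈ Finset.Icc 1 (N + 1), e i * (∫ ω, Y i ω ∂P) := by
    intro e θ₁' θ₂'
    rw [integral_finset_sum]
    · rw [Finset.mul_sum, Finset.mul_sum, ← Finset.sum_add_distrib]
      apply Finset.sum_congr rfl
      intro i hi
      have hi1 : 1 ≤ i := (Finset.mem_Icc.1 hi).1
      rw [integral_const_mul, integral_add (integrable_const θ₁')
        ((hYint i hi1).const_mul θ₂'), integral_const_mul, integral_const]
      simp only [measure_univ, probReal_univ, ENNReal.toReal_one, smul_eq_mul, one_mul, mul_one]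
      ring
    · intro i hi
      have hi1 : 1 ≤ i := (Finset.mem_Icc.1 hi).1
      exact ((integrable_const θ₁').add ((hYint i hi1).const_mul θ₂')).const_mul (e i)
  -- sum of c's is zero
  have hsumc : ∑ i ∈ Finset.Icc 1 (N + 1), c i = 0 := by
    have e1 := hunb 1 1 one_pos
    have e0 := hunb 0 1 one_pos
    rw [hEval c 1 1] at e1
    rw [hEval c 0 1] at e0
    simp only [one_mul, zero_mul, zero_add] at e1 e0
    linarith
  set K := Finset.Icc 1 N with hK_def
  set C : ℝ := ∑ k ∈ K, m k ^ 2 / v k with hC_def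
  have hC_nn : 0 ≤ C :=
    Finset.sum_nonneg fun k _ => div_nonneg (sq_nonneg _) (hv_nn k)
  by_cases hC : C = 0
  · -- degenerate case: every spacing is a.e. constant
    have hterm : ∀ k ∈ K, m k ^ 2 / v k = 0 := by
      intro k hk
      have := (Finset.sum_eq_zero_iff_of_nonneg
        (fun k _ => div_nonneg (sq_nonneg (m k)) (hv_nn k))).1 hC
      exact this k hk
    have hZconst : ∀ k ∈ K, Z k =ᵐ[P] fun _ => m k := by
      intro k hk
      have hk1 : 1 ≤ k := (Finset.mem_Icc.1 hk).1
      rcases div_eq_zero_iff.1 (hterm k hk) with h | h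
      · have hm0 : m k = 0 := by
          have := sq_eq_zero_iff.1 h
          exact this
        have h0 : Z k =ᵐ[P] 0 :=
          (integral_eq_zero_iff_of_nonneg (fun ω => hZnn k hk1 ω) (hZint k hk1)).1 hm0
        rw [hm0]
        filter_upwards [h0] with ω hω
        simpa using hω
      · have hev : evariance (Z k) P = 0 := by
          have hlt := (hZL2 k hk1).evariance_lt_top
          have hto : (evariance (Z k) P).toReal = 0 := h
          rcases (ENNReal.toReal_eq_zero_iff _).1 hto with h' | h'
          · exact h'
          · exact absurd h' hlt.ne
        have := (evariance_eq_zero_iff (hZL2 k hk1).1.aemeasurable).1 hev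
        exact this
    have hYae : ∀ i, 1 ≤ i → i ≤ N + 1 →
        Y i =ᵐ[P] fun ω => Y 1 ω + ∑ k ∈ Finset.Icc 1 (i - 1), m k := by
      intro i
      induction i with
      | zero => omega
      | succ j ih =>
        intro h1 hl
        by_cases hj : j = 0
        · subst hj
          simp
        · have hj1 : 1 ≤ j := by omega
          have hZj : Z j =ᵐ[P] fun _ => m j :=
            hZconst j (Finset.mem_Icc.2 ⟨hj1, by omega⟩)
          filter_upwards [ih hj1 (by omega), hZj] with ω h1' h2'
          have hYj : Y (j + 1) ω = Y j ω + m j := by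
            have h3 := hZ j hj1 ω
            have h4 : Z j ω = m j := h2'
            linarith
          rw [hYj, h1']
          have hsp : ∑ k ∈ Finset.Icc 1 ((j + 1) - 1), m k
              = (∑ k ∈ Finset.Icc 1 (j - 1), m k) + m j := by
            have hj' : j = (j - 1) + 1 := by omega
            rw [Nat.add_sub_cancel, hj', Finset.sum_Icc_succ_top (by omega), ← hj']
          rw [hsp]
          ring
    have hLconst : (fun ω => ∑ i ∈ Finset.Icc 1 (N + 1), c i * Y i ω) =ᵐ[P]
        fun _ => ∑ i ∈ Finset.Icc 1 (N + 1), c i * (∑ k ∈ Finset.Icc 1 (i - 1), m k) := by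
      have h : ∀ᵐ ω ∂P, ∀ i ∈ Finset.Icc 1 (N + 1),
          Y i ω = Y 1 ω + ∑ k ∈ Finset.Icc 1 (i - 1), m k := by
        rw [Filter.eventually_all_finset]
        intro i hi
        exact hYae i (Finset.mem_Icc.1 hi).1 (Finset.mem_Icc.1 hi).2
      filter_upwards [h] with ω hω
      rw [Finset.sum_congr rfl (fun i hi => by rw [hω i hi])]
      simp only [mul_add, Finset.sum_add_distrib, ← Finset.sum_mul, hsumc, zero_mul, zero_add]
    rw [my_variance_congr hLconst, my_variance_const, hC, div_zero, mul_zero]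
  · -- main case
    have hCpos : 0 < C := lt_of_le_of_ne hC_nn (Ne.symm hC)
    set a : ℕ → ℝ := fun k => if k ∈ K then m k / v k / C else 0 with ha_def
    have ha_nn : ∀ k, 0 ≤ a k := by
      intro k
      simp only [ha_def]
      split
      · rename_i hk
        exact div_nonneg (div_nonneg (hm_nn k (Finset.mem_Icc.1 hk).1) (hv_nn k)) hCpos.le
      · exact le_rfl
    have hA0 : a 0 = 0 := by
      have h0 : (0 : ℕ) ∉ K := by simp [hK_def, Finset.mem_Icc]
      simp [ha_def, h0]
    have hAn : a (N + 1) = 0 := by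
      have h0 : (N + 1) ∉ K := by
        simp only [hK_def, Finset.mem_Icc, not_and]
        omega
      simp [ha_def, h0]
    set d : ℕ → ℝ := fun i => a (i - 1) - a i with hd_def
    have htel : ∀ g : ℕ → ℝ, ∑ i ∈ Finset.Icc 1 (N + 1), d i * g i
        = ∑ k ∈ K, a k * (g (k + 1) - g k) := fun g => my_telescope_sum N a g hA0 hAn
    have hUZ : ∀ ω, ∑ i ∈ Finset.Icc 1 (N + 1), d i * Y i ω = ∑ k ∈ K, a k * Z k ω := by
      intro ω
      rw [htel (fun i => Y i ω)]
      apply Finset.sum_congr rfl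
      intro k hk
      rw [hZ k (Finset.mem_Icc.1 hk).1 ω]
    have ham : ∀ k ∈ K, a k * m k = m k ^ 2 / v k / C := by
      intro k hk
      simp only [ha_def, if_pos hk]
      rw [div_div, div_mul_eq_mul_div, div_div, ← sq]
    have hsum_am : ∑ k ∈ K, a k * m k = 1 := by
      rw [Finset.sum_congr rfl ham, ← Finset.sum_div]
      exact div_self hC
    have hd_unb : ∀ θ₁' θ₂' : ℝ, 0 < θ₂' →
        (∫ ω, ∑ i ∈ Finset.Icc 1 (N + 1), d i * (θ₁' + θ₂' * Y i ω) ∂P) = θ₂' := by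
      intro θ₁' θ₂' _
      rw [hEval d θ₁' θ₂']
      have h1 : ∑ i ∈ Finset.Icc 1 (N + 1), d i = 0 := by
        have h := htel (fun _ => 1)
        simpa using h
      have h2 : ∑ i ∈ Finset.Icc 1 (N + 1), d i * (∫ ω, Y i ω ∂P) = 1 := by
        rw [htel (fun i => ∫ ω, Y i ω ∂P)]
        have e : ∀ k ∈ K, a k * ((∫ ω, Y (k + 1) ω ∂P) - ∫ ω, Y k ω ∂P) = a k * m k := by
          intro k hk
          have hk1 : 1 ≤ k := (Finset.mem_Icc.1 hk).1
          congr 1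
          rw [← integral_sub (hYint (k + 1) (by omega)) (hYint k hk1)]
          exact integral_congr_ae (Filter.Eventually.of_forall fun ω => (hZ k hk1 ω).symm)
        rw [Finset.sum_congr rfl e, hsum_am]
      rw [h1, h2, mul_zero, mul_one, zero_add]
    have hLU := hblue d hd_unb
    set W : Ω → ℝ := fun ω => ∑ k ∈ K, a k * Z k ω with hW_def
    have hUW : (fun ω => ∑ i ∈ Finset.Icc 1 (N + 1), d i * Y i ω) = W := funext hUZ
    rw [hUW] at hLU
    have hZc : ∀ k, 1 ≤ k → MemLp (fun ω => Z k ω - m k) 2 P :=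
      fun k hk => (hZL2 k hk).sub (memLp_const (m k))
    have hprod : ∀ i ∈ K, ∀ j ∈ K,
        Integrable (fun ω => (a i * (Z i ω - m i)) * (a j * (Z j ω - m j))) P := by
      intro i hi j hj
      have hi1 : 1 ≤ i := (Finset.mem_Icc.1 hi).1
      have hj1 : 1 ≤ j := (Finset.mem_Icc.1 hj).1
      have heq : (fun ω => (a i * (Z i ω - m i)) * (a j * (Z j ω - m j)))
          = fun ω => (a i * a j) * ((Z i ω - m i) * (Z j ω - m j)) := funext fun ω => by ring
      rw [heq]
      exact (my_L2_mul_integrable (hZc i hi1) (hZc j hj1)).const_mul (a i * a j)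
    have hWL2 : MemLp W 2 P :=
      memLp_finset_sum K fun k hk => (hZL2 k (Finset.mem_Icc.1 hk).1).const_mul (a k)
    have hEW : ∫ ω, W ω ∂P = ∑ k ∈ K, a k * m k := by
      rw [hW_def, integral_finset_sum K
        (fun k hk => (hZint k (Finset.mem_Icc.1 hk).1).const_mul (a k))]
      exact Finset.sum_congr rfl fun k hk => integral_const_mul _ _
    have hvarW : variance W P
        = ∑ i ∈ K, ∑ j ∈ K, a i * a j * ∫ ω, (Z i ω - m i) * (Z j ω - m j) ∂P := by
      rw [my_variance_eq_integral hWL2]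
      have hcent : ∀ ω, W ω - ∫ ω', W ω' ∂P = ∑ k ∈ K, a k * (Z k ω - m k) := by
        intro ω
        rw [hEW, ← Finset.sum_sub_distrib]
        exact Finset.sum_congr rfl fun k hk => (mul_sub _ _ _).symm
      calc ∫ ω, (W ω - ∫ ω', W ω' ∂P) ^ 2 ∂P
          = ∫ ω, ∑ i ∈ K, ∑ j ∈ K,
              (a i * (Z i ω - m i)) * (a j * (Z j ω - m j)) ∂P := by
            apply integral_congr_ae (Filter.Eventually.of_forall fun ω => ?_)
            rw [hcent ω, sq, Finset.sum_mul_sum]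
        _ = ∑ i ∈ K, ∑ j ∈ K,
              ∫ ω, (a i * (Z i ω - m i)) * (a j * (Z j ω - m j)) ∂P := by
            rw [integral_finset_sum K
              (fun i hi => integrable_finset_sum K (fun j hj => hprod i hi j hj))]
            exact Finset.sum_congr rfl fun i hi =>
              integral_finset_sum K (fun j hj => hprod i hi j hj)
        _ = ∑ i ∈ K, ∑ j ∈ K, a i * a j * ∫ ω, (Z i ω - m i) * (Z j ω - m j) ∂P := by
            apply Finset.sum_congr rfl
            intro i _
            apply Finset.sum_congr rfl
            intro j _
            rw [← integral_const_mul]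
            exact integral_congr_ae (Filter.Eventually.of_forall fun ω => by ring)
    have hbound : ∑ i ∈ K, ∑ j ∈ K, a i * a j * ∫ ω, (Z i ω - m i) * (Z j ω - m j) ∂P
        ≤ ∑ i ∈ K, a i ^ 2 * v i := by
      apply Finset.sum_le_sum
      intro i hi
      have hi1 : 1 ≤ i := (Finset.mem_Icc.1 hi).1
      have hdiag : a i * a i * ∫ ω, (Z i ω - m i) * (Z i ω - m i) ∂P = a i ^ 2 * v i := by
        have hv : v i = ∫ ω, (Z i ω - m i) ^ 2 ∂P := my_variance_eq_integral (hZL2 i hi1)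
        have h2 : ∫ ω, (Z i ω - m i) * (Z i ω - m i) ∂P = ∫ ω, (Z i ω - m i) ^ 2 ∂P :=
          integral_congr_ae (Filter.Eventually.of_forall fun ω => (sq _).symm)
        rw [h2, hv]
        ring
      rw [← Finset.add_sum_erase K _ hi]
      have hrest : ∑ j ∈ K.erase i,
          a i * a j * ∫ ω, (Z i ω - m i) * (Z j ω - m j) ∂P ≤ 0 := by
        apply Finset.sum_nonpos
        intro j hj
        have hj' := Finset.mem_erase.1 hj
        have hj1 : 1 ≤ j := (Finset.mem_Icc.1 hj'.2).1
        exact mul_nonpos_of_nonneg_of_nonpos (mul_nonneg (ha_nn i) (ha_nn j))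
          (hNCP i j hi1 hj1 (Ne.symm hj'.1))
      linarith [hdiag, hrest]
    have hsum_av : ∑ i ∈ K, a i ^ 2 * v i = 1 / C := by
      have e : ∀ i ∈ K, a i ^ 2 * v i = (m i ^ 2 / v i) / C ^ 2 := by
        intro i hi
        simp only [ha_def, if_pos hi]
        by_cases hv : v i = 0
        · simp [hv]
        · field_simp
      rw [Finset.sum_congr rfl e, ← Finset.sum_div, ← hC_def, pow_two, ← div_div, div_self hC]
    have hWvar : variance W P ≤ 1 / C := by
      rw [hvarW]
      exact hbound.trans (le_of_eq hsum_av)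
    calc θ₂ ^ 2 * variance (fun ω => ∑ i ∈ Finset.Icc 1 (N + 1), c i * Y i ω) P
        ≤ θ₂ ^ 2 * variance W P := mul_le_mul_of_nonneg_left hLU (sq_nonneg θ₂)
      _ ≤ θ₂ ^ 2 * (1 / C) := mul_le_mul_of_nonneg_left hWvar (sq_nonneg θ₂)
      _ = θ₂ ^ 2 / C := by rw [mul_one_div]
end
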